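/- arXiv:2011.06067 — 7 statements merged into one kernel-verified Lean document; each statement's English description precedes it below -/
import Mathlib

section
/- Let 1 < α < 2, let β satisfy 1/α + 1/β = 1, and let d ∈ (0, 1 − 1/α). For every g ∈ L^1(ℝ) ∩ L^α(ℝ) and every h ∈ L^β(ℝ), one has ∫_ℝ |h(x) (I_-^d g)(x)| dx ≤ [ (1/Γ(d)) ( ‖g‖_α / d + ‖g‖_1 / (α(1−d) − 1)^{1/α} ) ] · ‖h‖_β. -/
open MeasureTheory
open scoped ENNReal NNReal

/-- The right-sided Riemann–Liouville fractional integral of order `d`. -/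
noncomputable def RLright (d : ℝ) (f : ℝ → ℝ) (x : ℝ) : ℝ :=
  (1 / Real.Gamma d) * ∫ t in Set.Ioi x, f t * (t - x) ^ (d - 1)

private lemma lint_mul_indicator {S : Set ℝ} (hS : MeasurableSet S) (φ ψ : ℝ → ℝ≥0∞) :
    ∫⁻ t, φ t * S.indicator ψ t = ∫⁻ t in S, φ t * ψ t := by
  rw [← lintegral_indicator hS]
  congr 1; ext t; by_cases ht : t ∈ S <;> simp [ht]

/-- for `g ∈ L^1(ℝ) ∩ L^α(ℝ)` and `h ∈ L^β(ℝ)`,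
`∫ |h (I_-^d g)| ≤ (1/Γ(d)) (‖g‖_α/d + ‖g‖_1/(α(1-d)-1)^{1/α}) ‖h‖_β`. -/
theorem stmt3 (α β d : ℝ) (hα : 1 < α ∧ α < 2) (hβ : 1 / α + 1 / β = 1)
    (hd : d ∈ Set.Ioo (0 : ℝ) (1 - 1 / α))
    (g h : ℝ → ℝ) (hg : Measurable g) (hh : Measurable h)
    (hg1 : MemLp g 1 (volume : Measure ℝ))
    (hgα : MemLp g (ENNReal.ofReal α) (volume : Measure ℝ))
    (hhβ : MemLp h (ENNReal.ofReal β) (volume : Measure ℝ)) :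
    ∫ x : ℝ, |h x * RLright d g x| ≤
      ((1 / Real.Gamma d) *
          ((∫ x : ℝ, |g x| ^ α) ^ (1 / α) / d +
            (∫ x : ℝ, |g x|) / (α * (1 - d) - 1) ^ (1 / α))) *
        (∫ x : ℝ, |h x| ^ β) ^ (1 / β) := by
  obtain ⟨hα1, hα2⟩ := hα
  obtain ⟨hd0, hd1⟩ := hd
  have hα0 : (0:ℝ) < α := by linarith
  have hβ0 : (0:ℝ) < β := by
    rcases lt_or_ge 0 β with hb | hb
    · exact hb
    · exfalso
      have h1 : 1/β ≤ 0 := one_div_nonpos.mpr hb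
      have h2 : 1/α < 1 := by rw [div_lt_one hα0]; linarith
      linarith
  have hβ1 : 1 < β := by
    have h2 : (0:ℝ) < 1/α := by positivity
    have h3 : 1/β < 1 := by linarith
    rw [div_lt_one hβ0] at h3; linarith
  have hconj : Real.HolderConjugate β α := ⟨by rw [inv_one, ← one_div, ← one_div]; linarith, hβ0, hα0⟩
  have hc : 0 < α * (1 - d) - 1 := by
    have h1 : 1/α < 1 - d := by linarith
    have h2 : 1 < (1-d) * α := (div_lt_iff₀ hα0).mp h1
    have h3 : (1-d) * α = α * (1-d) := mul_comm _ _
    linarith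
  have hΓ : 0 < Real.Gamma d := Real.Gamma_pos_of_pos hd0
  have hr : (d-1)*α < -1 := by
    have h4 : (d-1)*α = -(α*(1-d)) := by ring
    linarith
  -- kernels
  set K1 : ℝ → ℝ≥0∞ := (Set.Ioc (0:ℝ) 1).indicator (fun s => ENNReal.ofReal (s ^ (d-1))) with hK1def
  set K2 : ℝ → ℝ≥0∞ := (Set.Ioi (1:ℝ)).indicator (fun s => ENNReal.ofReal (s ^ (d-1))) with hK2def
  have hrm : Measurable fun s : ℝ => ENNReal.ofReal (s ^ (d-1)) :=
    ENNReal.measurable_ofReal.comp (measurable_id'.pow_const _)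
  have hK1m : Measurable K1 := hrm.indicator measurableSet_Ioc
  have hK2m : Measurable K2 := hrm.indicator measurableSet_Ioi
  -- ennreal norms
  set H : ℝ≥0∞ := (∫⁻ x, (‖h x‖₊ : ℝ≥0∞) ^ β) ^ (1/β) with hHdef
  set Ga : ℝ≥0∞ := (∫⁻ x, (‖g x‖₊ : ℝ≥0∞) ^ α) ^ (1/α) with hGadef
  set N1 : ℝ≥0∞ := ∫⁻ x, (‖g x‖₊ : ℝ≥0∞) with hN1def
  -- splitting of the kernel integral
  have hGsplit : ∀ x : ℝ,
      (∫⁻ t in Set.Ioi x, (‖g t‖₊ : ℝ≥0∞) * ENNReal.ofReal ((t - x) ^ (d-1)))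
      = (∫⁻ s, (‖g (x + s)‖₊ : ℝ≥0∞) * K1 s) + ∫⁻ t, (‖g t‖₊ : ℝ≥0∞) * K2 (t - x) := by
    intro x
    rw [← Set.Ioc_union_Ioi_eq_Ioi (by linarith : x ≤ x + 1),
      lintegral_union measurableSet_Ioi (Set.Ioc_disjoint_Ioi le_rfl)]
    congr 1
    · have e1 : ∫⁻ t in Set.Ioc x (x+1), (‖g t‖₊ : ℝ≥0∞) * ENNReal.ofReal ((t - x) ^ (d-1))
          = ∫⁻ t, (‖g t‖₊ : ℝ≥0∞) * K1 (t - x) := by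
        rw [← lint_mul_indicator measurableSet_Ioc]
        refine lintegral_congr fun t => ?_
        congr 1
        rw [hK1def]
        by_cases ht : t ∈ Set.Ioc x (x+1)
        · have hm : t - x ∈ Set.Ioc (0:ℝ) 1 := ⟨by linarith [ht.1], by linarith [ht.2]⟩
          simp only [Set.indicator_of_mem, ht, hm]
        · have hm : t - x ∉ Set.Ioc (0:ℝ) 1 := by
            intro hmem; exact ht ⟨by linarith [hmem.1], by linarith [hmem.2]⟩
          simp only [Set.indicator_of_notMem, ht, hm, not_false_iff]
      rw [e1, ← lintegral_add_left_eq_self (fun t => (‖g t‖₊ : ℝ≥0∞) * K1 (t - x)) x]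
      exact lintegral_congr fun s => by rw [add_sub_cancel_left]
    · rw [← lint_mul_indicator measurableSet_Ioi]
      refine lintegral_congr fun t => ?_
      congr 1
      rw [hK2def]
      by_cases ht : t ∈ Set.Ioi (x+1)
      · have h2 : t - x ∈ Set.Ioi (1:ℝ) := by
          simp only [Set.mem_Ioi] at ht ⊢; linarith
        simp only [Set.indicator_of_mem, ht, h2]
      · have h2 : t - x ∉ Set.Ioi (1:ℝ) := by
          simp only [Set.mem_Ioi] at ht ⊢; linarith
        simp only [Set.indicator_of_notMem, ht, h2, not_false_iff]

  -- measurability of the fractional integral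
  have hPhim : Measurable fun p : ℝ × ℝ => Set.indicator {q : ℝ × ℝ | q.1 < q.2}
      (fun q => g q.2 * (q.2 - q.1) ^ (d-1)) p := by
    refine Measurable.indicator ?_ (measurableSet_lt measurable_fst measurable_snd)
    exact (hg.comp measurable_snd).mul ((measurable_snd.sub measurable_fst).pow_const _)
  have hFm : Measurable (RLright d g) := by
    have e : ∀ x, RLright d g x = (1/Real.Gamma d) *
        ∫ t, Set.indicator {q : ℝ × ℝ | q.1 < q.2}
          (fun q => g q.2 * (q.2 - q.1) ^ (d-1)) (x, t) := by
      intro x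
      unfold RLright
      congr 1
      rw [← integral_indicator measurableSet_Ioi]
      refine integral_congr_ae (Filter.Eventually.of_forall fun t => ?_)
      by_cases ht : x < t <;> simp [Set.indicator_apply, Set.mem_Ioi, ht]
    rw [funext e]
    exact (hPhim.stronglyMeasurable.integral_prod_right'.measurable).const_mul _
  -- pointwise bound
  have hpt : ∀ x : ℝ, ENNReal.ofReal |RLright d g x| ≤ ENNReal.ofReal (1/Real.Gamma d) *
      ∫⁻ t in Set.Ioi x, (‖g t‖₊ : ℝ≥0∞) * ENNReal.ofReal ((t - x) ^ (d-1)) := by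
    intro x
    have habs : |RLright d g x|
        = (1/Real.Gamma d) * |∫ t in Set.Ioi x, g t * (t-x) ^ (d-1)| := by
      unfold RLright; rw [abs_mul, abs_of_pos (by positivity)]
    rw [habs, ENNReal.ofReal_mul (by positivity)]
    refine mul_le_mul_right ?_ _
    by_cases hint : IntegrableOn (fun t => g t * (t - x) ^ (d-1)) (Set.Ioi x) volume
    · calc ENNReal.ofReal |∫ t in Set.Ioi x, g t * (t-x) ^ (d-1)|
          ≤ ENNReal.ofReal (∫ t in Set.Ioi x, |g t * (t-x) ^ (d-1)|) := by
            apply ENNReal.ofReal_le_ofReal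
            simpa [Real.norm_eq_abs, abs_mul] using norm_integral_le_integral_norm
              (μ := volume.restrict (Set.Ioi x)) (fun t => g t * (t-x) ^ (d-1))
        _ = ∫⁻ t in Set.Ioi x, ENNReal.ofReal |g t * (t-x) ^ (d-1)| :=
            ofReal_integral_eq_lintegral_ofReal hint.abs
              (Filter.Eventually.of_forall fun t => abs_nonneg _)
        _ = _ := by
            refine setLIntegral_congr_fun measurableSet_Ioi
              (fun t ht => ?_)
            have htx : (0:ℝ) ≤ t - x := by
              simp only [Set.mem_Ioi] at ht; linarith
            have h1 : (0:ℝ) ≤ (t - x) ^ (d-1) := Real.rpow_nonneg htx _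
            rw [abs_mul, abs_of_nonneg h1, ENNReal.ofReal_mul (abs_nonneg _),
              ← Real.norm_eq_abs, ofReal_norm, enorm_eq_nnnorm]
    · rw [integral_undef hint]
      simp
  -- the two partial convolutions
  set P1 : ℝ → ℝ≥0∞ := fun x => ∫⁻ s, (‖g (x + s)‖₊ : ℝ≥0∞) * K1 s with hP1def
  set P2 : ℝ → ℝ≥0∞ := fun x => ∫⁻ t, (‖g t‖₊ : ℝ≥0∞) * K2 (t - x) with hP2def
  have hP1m : Measurable P1 :=
    Measurable.lintegral_prod_right'
      (f := fun p : ℝ × ℝ => (‖g (p.1 + p.2)‖₊ : ℝ≥0∞) * K1 p.2)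
      (((hg.comp (measurable_fst.add measurable_snd)).nnnorm.coe_nnreal_ennreal).mul (hK1m.comp measurable_snd))
  have hP2m : Measurable P2 :=
    Measurable.lintegral_prod_right'
      (f := fun p : ℝ × ℝ => (‖g p.2‖₊ : ℝ≥0∞) * K2 (p.2 - p.1))
      (((hg.comp measurable_snd).nnnorm.coe_nnreal_ennreal).mul (hK2m.comp (measurable_snd.sub measurable_fst)))
  -- value of the first kernel integral
  have hK1int : ∫⁻ s, K1 s = ENNReal.ofReal (1/d) := by
    rw [hK1def, lintegral_indicator measurableSet_Ioc,
      ← ofReal_integral_eq_lintegral_ofReal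
        ((intervalIntegral.intervalIntegrable_rpow' (by linarith)).1)
        ((ae_restrict_iff' measurableSet_Ioc).2
          (Filter.Eventually.of_forall fun s hs => Real.rpow_nonneg hs.1.le _))]
    congr 1
    rw [← intervalIntegral.integral_of_le zero_le_one,
      integral_rpow (Or.inl (by linarith : (-1:ℝ) < d - 1))]
    have hde : d - 1 + 1 = d := by ring
    rw [hde, Real.one_rpow, Real.zero_rpow hd0.ne']
    norm_num
  -- value of the second kernel integral (raised to power α)
  have hK2int : ∫⁻ u, (K2 u) ^ α = ENNReal.ofReal (1/(α*(1-d)-1)) := by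
    have e : ∀ u : ℝ, (K2 u) ^ α
        = (Set.Ioi (1:ℝ)).indicator (fun u => ENNReal.ofReal (u ^ ((d-1)*α))) u := by
      intro u
      rw [hK2def]
      by_cases hu : u ∈ Set.Ioi (1:ℝ)
      · have hu0 : (0:ℝ) ≤ u := by
          simp only [Set.mem_Ioi] at hu; linarith
        simp only [Set.indicator_of_mem hu]
        rw [ENNReal.ofReal_rpow_of_nonneg (Real.rpow_nonneg hu0 _) hα0.le,
          ← Real.rpow_mul hu0]
      · simp only [Set.indicator_of_notMem hu]
        exact ENNReal.zero_rpow_of_pos hα0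
    simp_rw [e]
    rw [lintegral_indicator measurableSet_Ioi,
      ← ofReal_integral_eq_lintegral_ofReal (integrableOn_Ioi_rpow_of_lt hr one_pos)
        ((ae_restrict_iff' measurableSet_Ioi).2 (Filter.Eventually.of_forall fun u hu =>
          Real.rpow_nonneg (by simp only [Set.mem_Ioi] at hu; linarith) _)),
      integral_Ioi_rpow_of_lt hr one_pos, Real.one_rpow]
    congr 1
    rw [show (d-1)*α + 1 = -(α*(1-d)-1) by ring, neg_div_neg_eq]
  -- Step A
  have hSbound : ∫⁻ x, (‖h x‖₊ : ℝ≥0∞) * P1 x ≤ H * Ga * ENNReal.ofReal (1/d) := by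
    have e1 : ∀ x : ℝ, (‖h x‖₊ : ℝ≥0∞) * P1 x
        = ∫⁻ s, (‖h x‖₊ : ℝ≥0∞) * (‖g (x + s)‖₊ : ℝ≥0∞) * K1 s := by
      intro x
      simp only [hP1def]
      rw [← lintegral_const_mul' _ _ ENNReal.coe_ne_top]
      exact lintegral_congr fun s => (mul_assoc _ _ _).symm
    have hmeas : AEMeasurable
        (Function.uncurry fun x s => (‖h x‖₊ : ℝ≥0∞) * (‖g (x + s)‖₊ : ℝ≥0∞) * K1 s)
        ((volume : Measure ℝ).prod (volume : Measure ℝ)) :=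
      (((hh.comp measurable_fst).nnnorm.coe_nnreal_ennreal.mul
        ((hg.comp (measurable_fst.add measurable_snd)).nnnorm.coe_nnreal_ennreal)).mul
        (hK1m.comp measurable_snd)).aemeasurable
    have swap : ∫⁻ x, (‖h x‖₊ : ℝ≥0∞) * P1 x
        = ∫⁻ s, (∫⁻ x, (‖h x‖₊ : ℝ≥0∞) * (‖g (x + s)‖₊ : ℝ≥0∞)) * K1 s := by
      simp_rw [e1]
      rw [lintegral_lintegral_swap hmeas]
      exact lintegral_congr fun s =>
        lintegral_mul_const _ ((hh.nnnorm.coe_nnreal_ennreal).mul ((hg.comp (measurable_add_const s)).nnnorm.coe_nnreal_ennreal))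
    rw [swap]
    have hin : ∀ s : ℝ, (∫⁻ x, (‖h x‖₊ : ℝ≥0∞) * (‖g (x + s)‖₊ : ℝ≥0∞)) ≤ H * Ga := by
      intro s
      have hH := ENNReal.lintegral_mul_le_Lp_mul_Lq volume hconj
        (f := fun a => ((‖h a‖₊ : ℝ≥0∞))) (g := fun a => ((‖g (a + s)‖₊ : ℝ≥0∞)))
        hh.nnnorm.coe_nnreal_ennreal.aemeasurable ((hg.comp (measurable_add_const s)).nnnorm.coe_nnreal_ennreal.aemeasurable)
      simp only [Pi.mul_apply] at hH
      refine hH.trans_eq ?_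
      have e3 : ∫⁻ x, ((‖g (x + s)‖₊ : ℝ≥0∞)) ^ α = ∫⁻ x, ((‖g x‖₊ : ℝ≥0∞)) ^ α :=
        lintegral_add_right_eq_self (fun y => ((‖g y‖₊ : ℝ≥0∞)) ^ α) s
      rw [hHdef, hGadef, e3]
    calc ∫⁻ s, (∫⁻ x, (‖h x‖₊ : ℝ≥0∞) * (‖g (x + s)‖₊ : ℝ≥0∞)) * K1 s
        ≤ ∫⁻ s, K1 s * (H * Ga) := lintegral_mono fun s => by
          rw [mul_comm]; exact mul_le_mul_right (hin s) _
      _ = (∫⁻ s, K1 s) * (H * Ga) := lintegral_mul_const _ hK1m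
      _ = H * Ga * ENNReal.ofReal (1/d) := by rw [hK1int]; ring
  -- Step B
  have hTbound : ∫⁻ x, (‖h x‖₊ : ℝ≥0∞) * P2 x
      ≤ N1 * (H * ENNReal.ofReal ((1/(α*(1-d)-1)) ^ (1/α))) := by
    have e1 : ∀ x : ℝ, (‖h x‖₊ : ℝ≥0∞) * P2 x
        = ∫⁻ t, (‖g t‖₊ : ℝ≥0∞) * ((‖h x‖₊ : ℝ≥0∞) * K2 (t - x)) := by
      intro x
      simp only [hP2def]
      rw [← lintegral_const_mul' _ _ ENNReal.coe_ne_top]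
      exact lintegral_congr fun t => by ring
    have hmeas : AEMeasurable
        (Function.uncurry fun x t => (‖g t‖₊ : ℝ≥0∞) * ((‖h x‖₊ : ℝ≥0∞) * K2 (t - x)))
        ((volume : Measure ℝ).prod (volume : Measure ℝ)) :=
      (((hg.comp measurable_snd).nnnorm.coe_nnreal_ennreal).mul
        (((hh.comp measurable_fst).nnnorm.coe_nnreal_ennreal).mul
          (hK2m.comp (measurable_snd.sub measurable_fst)))).aemeasurable
    have swap : ∫⁻ x, (‖h x‖₊ : ℝ≥0∞) * P2 x
        = ∫⁻ t, (‖g t‖₊ : ℝ≥0∞) * ∫⁻ x, (‖h x‖₊ : ℝ≥0∞) * K2 (t - x) := by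
      simp_rw [e1]
      rw [lintegral_lintegral_swap hmeas]
      exact lintegral_congr fun t => lintegral_const_mul' _ _ ENNReal.coe_ne_top
    rw [swap]
    have hin : ∀ t : ℝ, (∫⁻ x, (‖h x‖₊ : ℝ≥0∞) * K2 (t - x))
        ≤ H * ENNReal.ofReal ((1/(α*(1-d)-1)) ^ (1/α)) := by
      intro t
      have hH := ENNReal.lintegral_mul_le_Lp_mul_Lq volume hconj
        (f := fun a => ((‖h a‖₊ : ℝ≥0∞))) (g := fun a => K2 (t - a))
        hh.nnnorm.coe_nnreal_ennreal.aemeasurable ((hK2m.comp (measurable_const.sub measurable_id')).aemeasurable)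
      simp only [Pi.mul_apply] at hH
      refine hH.trans ?_
      rw [hHdef]
      refine mul_le_mul_right (le_of_eq ?_) _
      have e2 : ∫⁻ x, (K2 (t - x)) ^ α = ∫⁻ u, (K2 u) ^ α :=
        (Measure.measurePreserving_sub_left volume t).lintegral_comp (hK2m.pow_const α)
      rw [e2, hK2int]
      exact ENNReal.ofReal_rpow_of_nonneg (by positivity) (by positivity)
    calc ∫⁻ t, (‖g t‖₊ : ℝ≥0∞) * ∫⁻ x, (‖h x‖₊ : ℝ≥0∞) * K2 (t - x)
        ≤ ∫⁻ t, (‖g t‖₊ : ℝ≥0∞) * (H * ENNReal.ofReal ((1/(α*(1-d)-1)) ^ (1/α))) :=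
          lintegral_mono fun t => mul_le_mul_right (hin t) _
      _ = N1 * (H * ENNReal.ofReal ((1/(α*(1-d)-1)) ^ (1/α))) := by
          rw [hN1def, lintegral_mul_const _ hg.nnnorm.coe_nnreal_ennreal]
  -- finiteness
  have hAfin : (∫⁻ x, ((‖g x‖₊ : ℝ≥0∞)) ^ α) ≠ ⊤ := by
    have h1 := hgα.2
    rw [eLpNorm_eq_lintegral_rpow_enorm_toReal
      (by simp only [ne_eq, ENNReal.ofReal_eq_zero, not_le]; exact hα0) ENNReal.ofReal_ne_top,
      ENNReal.toReal_ofReal hα0.le] at h1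
    intro htop
    simp only [enorm_eq_nnnorm] at h1; rw [htop, ENNReal.top_rpow_of_pos (by positivity : (0:ℝ) < 1/α)] at h1
    exact lt_irrefl _ h1
  have hBfin : (∫⁻ x, ((‖h x‖₊ : ℝ≥0∞)) ^ β) ≠ ⊤ := by
    have h1 := hhβ.2
    rw [eLpNorm_eq_lintegral_rpow_enorm_toReal
      (by simp only [ne_eq, ENNReal.ofReal_eq_zero, not_le]; exact hβ0) ENNReal.ofReal_ne_top,
      ENNReal.toReal_ofReal hβ0.le] at h1
    intro htop
    simp only [enorm_eq_nnnorm] at h1; rw [htop, ENNReal.top_rpow_of_pos (by positivity : (0:ℝ) < 1/β)] at h1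
    exact lt_irrefl _ h1
  have h1fin : N1 ≠ ⊤ := by
    have h1 := hg1.2
    rw [eLpNorm_one_eq_lintegral_enorm] at h1
    rw [hN1def]
    exact h1.ne
  -- real/ennreal identifications
  have hAg : ∫ x : ℝ, |g x| ^ α = (∫⁻ x, ((‖g x‖₊ : ℝ≥0∞)) ^ α).toReal := by
    rw [integral_eq_lintegral_of_nonneg_ae
      (Filter.Eventually.of_forall fun x => Real.rpow_nonneg (abs_nonneg _) _)
      ((hg.abs.pow_const _).aestronglyMeasurable)]
    congr 1
    refine lintegral_congr fun x => ?_
    rw [← ENNReal.ofReal_rpow_of_nonneg (abs_nonneg _) hα0.le, ← Real.norm_eq_abs,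
      ofReal_norm, enorm_eq_nnnorm]
  have hAh : ∫ x : ℝ, |h x| ^ β = (∫⁻ x, ((‖h x‖₊ : ℝ≥0∞)) ^ β).toReal := by
    rw [integral_eq_lintegral_of_nonneg_ae
      (Filter.Eventually.of_forall fun x => Real.rpow_nonneg (abs_nonneg _) _)
      ((hh.abs.pow_const _).aestronglyMeasurable)]
    congr 1
    refine lintegral_congr fun x => ?_
    rw [← ENNReal.ofReal_rpow_of_nonneg (abs_nonneg _) hβ0.le, ← Real.norm_eq_abs,
      ofReal_norm, enorm_eq_nnnorm]
  have hA1 : ∫ x : ℝ, |g x| = N1.toReal := by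
    rw [integral_eq_lintegral_of_nonneg_ae (Filter.Eventually.of_forall fun x => abs_nonneg _)
      hg.abs.aestronglyMeasurable, hN1def]
    congr 1
    exact lintegral_congr fun x => by rw [← Real.norm_eq_abs, ofReal_norm, enorm_eq_nnnorm]
  have hGaR : Ga = ENNReal.ofReal ((∫ x : ℝ, |g x| ^ α) ^ (1/α)) := by
    rw [hGadef, hAg, ← ENNReal.ofReal_rpow_of_nonneg ENNReal.toReal_nonneg (by positivity),
      ENNReal.ofReal_toReal hAfin]
  have hHR : H = ENNReal.ofReal ((∫ x : ℝ, |h x| ^ β) ^ (1/β)) := by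
    rw [hHdef, hAh, ← ENNReal.ofReal_rpow_of_nonneg ENNReal.toReal_nonneg (by positivity),
      ENNReal.ofReal_toReal hBfin]
  have hN1R : N1 = ENNReal.ofReal (∫ x : ℝ, |g x|) := by
    rw [hA1, ENNReal.ofReal_toReal h1fin]
  -- nonnegativity of the real quantities
  have hAg0 : (0:ℝ) ≤ (∫ x : ℝ, |g x| ^ α) ^ (1/α) :=
    Real.rpow_nonneg (integral_nonneg fun x => Real.rpow_nonneg (abs_nonneg _) _) _
  have hBh0 : (0:ℝ) ≤ (∫ x : ℝ, |h x| ^ β) ^ (1/β) :=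
    Real.rpow_nonneg (integral_nonneg fun x => Real.rpow_nonneg (abs_nonneg _) _) _
  have hA10 : (0:ℝ) ≤ ∫ x : ℝ, |g x| := integral_nonneg fun x => abs_nonneg _
  -- the main estimate in ℝ≥0∞
  have hmain : (∫⁻ x, ENNReal.ofReal |h x * RLright d g x|)
      ≤ ENNReal.ofReal (((1 / Real.Gamma d) *
          ((∫ x : ℝ, |g x| ^ α) ^ (1 / α) / d +
            (∫ x : ℝ, |g x|) / (α * (1 - d) - 1) ^ (1 / α))) *
        (∫ x : ℝ, |h x| ^ β) ^ (1 / β)) := by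
    have pt : ∀ x, ENNReal.ofReal |h x * RLright d g x|
        ≤ ENNReal.ofReal (1/Real.Gamma d) *
          ((‖h x‖₊ : ℝ≥0∞) * P1 x + (‖h x‖₊ : ℝ≥0∞) * P2 x) := by
      intro x
      rw [abs_mul, ENNReal.ofReal_mul (abs_nonneg _), ← Real.norm_eq_abs (h x),
        ofReal_norm, enorm_eq_nnnorm]
      calc (‖h x‖₊ : ℝ≥0∞) * ENNReal.ofReal |RLright d g x|
          ≤ (‖h x‖₊ : ℝ≥0∞) * (ENNReal.ofReal (1/Real.Gamma d) * (P1 x + P2 x)) := by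
            refine mul_le_mul_right ?_ _
            refine (hpt x).trans_eq ?_
            rw [hGsplit x]
        _ = ENNReal.ofReal (1/Real.Gamma d) *
            ((‖h x‖₊ : ℝ≥0∞) * P1 x + (‖h x‖₊ : ℝ≥0∞) * P2 x) := by ring
    have step1 : (∫⁻ x, ENNReal.ofReal |h x * RLright d g x|)
        ≤ ENNReal.ofReal (1/Real.Gamma d) *
          ((∫⁻ x, (‖h x‖₊ : ℝ≥0∞) * P1 x) + ∫⁻ x, (‖h x‖₊ : ℝ≥0∞) * P2 x) := by
      calc (∫⁻ x, ENNReal.ofReal |h x * RLright d g x|)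
          ≤ ∫⁻ x, ENNReal.ofReal (1/Real.Gamma d) *
            ((‖h x‖₊ : ℝ≥0∞) * P1 x + (‖h x‖₊ : ℝ≥0∞) * P2 x) := lintegral_mono pt
        _ = ENNReal.ofReal (1/Real.Gamma d) * ∫⁻ x,
            ((‖h x‖₊ : ℝ≥0∞) * P1 x + (‖h x‖₊ : ℝ≥0∞) * P2 x) :=
            lintegral_const_mul' _ _ ENNReal.ofReal_ne_top
        _ = _ := by rw [lintegral_add_left (f := fun x => (‖h x‖₊ : ℝ≥0∞) * P1 x) (hh.nnnorm.coe_nnreal_ennreal.mul hP1m)]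
    refine step1.trans ?_
    refine le_trans (mul_le_mul_right (add_le_add hSbound hTbound) _) ?_
    rw [hGaR, hHR, hN1R]
    rw [← ENNReal.ofReal_mul hBh0, ← ENNReal.ofReal_mul (mul_nonneg hBh0 hAg0),
      ← ENNReal.ofReal_mul hBh0, ← ENNReal.ofReal_mul hA10,
      ← ENNReal.ofReal_add (by positivity) (by positivity),
      ← ENNReal.ofReal_mul (by positivity)]
    apply ENNReal.ofReal_le_ofReal
    apply le_of_eq
    rw [show (1/(α*(1-d)-1)) ^ (1/α) = ((α*(1-d)-1) ^ (1/α))⁻¹ by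
      rw [one_div, Real.inv_rpow hc.le]]
    ring
  -- conclusion
  have hL : ∫ x : ℝ, |h x * RLright d g x|
      = (∫⁻ x, ENNReal.ofReal |h x * RLright d g x|).toReal := by
    rw [integral_eq_lintegral_of_nonneg_ae (f := fun x => |h x * RLright d g x|)
      (Filter.Eventually.of_forall fun x => abs_nonneg _)
      ((hh.mul hFm).abs.aestronglyMeasurable)]
  rw [hL]
  refine ENNReal.toReal_le_of_le_ofReal ?_ hmain
  exact mul_nonneg (mul_nonneg (by positivity)
    (add_nonneg (div_nonneg hAg0 hd0.le) (div_nonneg hA10 (Real.rpow_nonneg hc.le _)))) hBh0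
end

section
/- Let 1 < α < 2 and d ∈ (0, 1 − 1/α). If g ∈ L^1(ℝ) ∩ L^α(ℝ), then ∫_ℝ |(I_-^d g)(x)|^α dx < ∞, i.e., the right-sided Riemann–Liouville fractional integral I_-^d g belongs to L^α(ℝ). -/
open MeasureTheory
open scoped ENNReal

/-- Young-type bound. -/
lemma young_aux {p q : ℝ} (hpq : Real.HolderConjugate p q)
    (A B : ℝ → ℝ≥0∞) (hA : Measurable A) (hB : Measurable B) :
    ∫⁻ x : ℝ, (∫⁻ t : ℝ, A t * B (t - x)) ^ p
      ≤ (∫⁻ t : ℝ, A t) ^ (p / q) * ((∫⁻ t : ℝ, A t) * ∫⁻ s : ℝ, (B s) ^ p) := by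
  have hp0 : 0 < p := hpq.pos
  have hq0 : 0 < q := hpq.symm.pos
  have hBmx : ∀ x : ℝ, Measurable fun t : ℝ => B (t - x) := fun x =>
    hB.comp (measurable_id.sub_const x)
  have key : ∀ x : ℝ, (∫⁻ t : ℝ, A t * B (t - x)) ^ p
      ≤ (∫⁻ t : ℝ, A t) ^ (p / q) * ∫⁻ t : ℝ, A t * (B (t - x)) ^ p := by
    intro x
    have holder := ENNReal.lintegral_mul_le_Lp_mul_Lq (volume : Measure ℝ) hpq.symm
      (f := fun t => (A t) ^ (1 / q)) (g := fun t => (A t) ^ (1 / p) * B (t - x))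
      ((hA.pow_const _).aemeasurable)
      (((hA.pow_const _).mul (hBmx x)).aemeasurable)
    have h1 : ∀ t : ℝ, ((fun t => (A t) ^ (1 / q)) * fun t => (A t) ^ (1 / p) * B (t - x)) t
        = A t * B (t - x) := by
      intro t
      simp only [Pi.mul_apply]
      rw [← mul_assoc, ← ENNReal.rpow_add_of_nonneg _ _ (by positivity) (by positivity)]
      rw [one_div, one_div, add_comm, hpq.inv_add_inv_eq_one, ENNReal.rpow_one]
    have h2 : ∀ t : ℝ, ((A t) ^ (1 / q)) ^ q = A t := by
      intro t
      rw [← ENNReal.rpow_mul, one_div, inv_mul_cancel₀ hq0.ne', ENNReal.rpow_one]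
    have h3 : ∀ t : ℝ, ((A t) ^ (1 / p) * B (t - x)) ^ p = A t * (B (t - x)) ^ p := by
      intro t
      rw [ENNReal.mul_rpow_of_nonneg _ _ hp0.le, ← ENNReal.rpow_mul, one_div,
        inv_mul_cancel₀ hp0.ne', ENNReal.rpow_one]
    simp only [h1, h2, h3] at holder
    calc (∫⁻ t : ℝ, A t * B (t - x)) ^ p
        ≤ ((∫⁻ t : ℝ, A t) ^ (1 / q) * (∫⁻ t : ℝ, A t * (B (t - x)) ^ p) ^ (1 / p)) ^ p :=
          ENNReal.rpow_le_rpow holder hp0.le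
      _ = (∫⁻ t : ℝ, A t) ^ (p / q) * ∫⁻ t : ℝ, A t * (B (t - x)) ^ p := by
          rw [ENNReal.mul_rpow_of_nonneg _ _ hp0.le, ← ENNReal.rpow_mul, ← ENNReal.rpow_mul,
            one_div, one_div, inv_mul_cancel₀ hp0.ne', ENNReal.rpow_one]
          ring_nf
          simp only [neg_add_eq_sub]
  calc ∫⁻ x : ℝ, (∫⁻ t : ℝ, A t * B (t - x)) ^ p
      ≤ ∫⁻ x : ℝ, (∫⁻ t : ℝ, A t) ^ (p / q) * ∫⁻ t : ℝ, A t * (B (t - x)) ^ p :=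
        lintegral_mono key
    _ = (∫⁻ t : ℝ, A t) ^ (p / q) * ∫⁻ x : ℝ, ∫⁻ t : ℝ, A t * (B (t - x)) ^ p :=
        lintegral_const_mul _ <| by
          apply Measurable.lintegral_prod_right
          exact (hA.comp measurable_snd).mul
            (((hB.comp (measurable_snd.sub measurable_fst))).pow_const p)
    _ = (∫⁻ t : ℝ, A t) ^ (p / q) * ∫⁻ t : ℝ, ∫⁻ x : ℝ, A t * (B (t - x)) ^ p := by
        rw [lintegral_lintegral_swap]
        exact ((hA.comp measurable_snd).mul
          (((hB.comp (measurable_snd.sub measurable_fst))).pow_const p)).aemeasurable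
    _ = (∫⁻ t : ℝ, A t) ^ (p / q) * ((∫⁻ t : ℝ, A t) * ∫⁻ s : ℝ, (B s) ^ p) := by
        congr 1
        have : ∀ t : ℝ, ∫⁻ x : ℝ, A t * (B (t - x)) ^ p = A t * ∫⁻ s : ℝ, (B s) ^ p := by
          intro t
          have hm : Measurable fun y : ℝ => (B (t - y)) ^ p :=
            (hB.comp (measurable_const.sub measurable_id)).pow_const p
          rw [lintegral_const_mul _ hm]
          congr 1
          exact (Measure.measurePreserving_sub_left (volume : Measure ℝ) t).lintegral_comp
            (hB.pow_const p)
        simp only [this]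
        exact lintegral_mul_const _ hA

/-- if `g ∈ L^1(ℝ) ∩ L^α(ℝ)`, then `∫ |(I_-^d g)(x)|^α dx < ∞`. -/
theorem stmt4 (α d : ℝ) (hα : 1 < α ∧ α < 2)
    (hd : d ∈ Set.Ioo (0 : ℝ) (1 - 1 / α))
    (g : ℝ → ℝ) (hg : Measurable g)
    (hg1 : MemLp g 1 (volume : Measure ℝ))
    (hgα : MemLp g (ENNReal.ofReal α) (volume : Measure ℝ)) :
    ∫⁻ x : ℝ, ENNReal.ofReal (|RLright d g x| ^ α) < ⊤ := by
  obtain ⟨hα1, hα2⟩ := hα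
  obtain ⟨hd0, hd1⟩ := hd
  have hα0 : (0:ℝ) < α := lt_trans one_pos hα1
  have hΓ : (0:ℝ) < Real.Gamma d := Real.Gamma_pos_of_pos hd0
  have hpq : Real.HolderConjugate α (Real.conjExponent α) :=
    Real.HolderConjugate.conjExponent hα1
  set q := Real.conjExponent α with hq
  -- the basic objects
  set G : ℝ → ℝ≥0∞ := fun t => (‖g t‖₊ : ℝ≥0∞) with hG
  set H : ℝ → ℝ≥0∞ := fun s => ENNReal.ofReal (s ^ (d - 1)) with hH
  set K1 : ℝ → ℝ≥0∞ := (Set.Ioc (0:ℝ) 1).indicator H with hK1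
  set K2 : ℝ → ℝ≥0∞ := (Set.Ioi (1:ℝ)).indicator H with hK2
  set C : ℝ≥0∞ := ENNReal.ofReal (1 / Real.Gamma d) with hC
  have hGm : Measurable G := hg.nnnorm.coe_nnreal_ennreal
  have hHm : Measurable H := (measurable_id.pow_const (d-1)).ennreal_ofReal
  have hK1m : Measurable K1 := hHm.indicator measurableSet_Ioc
  have hK2m : Measurable K2 := hHm.indicator measurableSet_Ioi
  set F1 : ℝ → ℝ≥0∞ := fun x => ∫⁻ t : ℝ, G t * K1 (t - x) with hF1
  set F2 : ℝ → ℝ≥0∞ := fun x => ∫⁻ t : ℝ, G t * K2 (t - x) with hF2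
  have hF1m : Measurable F1 := by
    apply Measurable.lintegral_prod_right
    exact (hGm.comp measurable_snd).mul (hK1m.comp (measurable_snd.sub measurable_fst))
  have hF2m : Measurable F2 := by
    apply Measurable.lintegral_prod_right
    exact (hGm.comp measurable_snd).mul (hK2m.comp (measurable_snd.sub measurable_fst))
  -- pointwise bound
  have claim : ∀ x : ℝ, ENNReal.ofReal (|RLright d g x| ^ α) ≤ (C * (F1 x + F2 x)) ^ α := by
    intro x
    rw [← ENNReal.ofReal_rpow_of_nonneg (abs_nonneg _) hα0.le]
    apply ENNReal.rpow_le_rpow _ hα0.le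
    -- |RL| ≤ C * (F1 + F2)
    have habs : |RLright d g x| = (1 / Real.Gamma d) * |∫ t in Set.Ioi x, g t * (t - x) ^ (d - 1)| := by
      rw [RLright, abs_mul, abs_of_pos (by positivity)]
    rw [habs, ENNReal.ofReal_mul (by positivity)]
    apply mul_le_mul_right
    -- bound the integral
    have step1 : ENNReal.ofReal |∫ t in Set.Ioi x, g t * (t - x) ^ (d - 1)|
        ≤ ∫⁻ t in Set.Ioi x, (‖g t * (t - x) ^ (d - 1)‖₊ : ℝ≥0∞) := by
      rw [← Real.enorm_eq_ofReal_abs]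
      exact enorm_integral_le_lintegral_enorm _
    refine step1.trans ?_
    have step2 : ∫⁻ t in Set.Ioi x, (‖g t * (t - x) ^ (d - 1)‖₊ : ℝ≥0∞)
        = ∫⁻ t in Set.Ioi x, G t * H (t - x) := by
      apply setLIntegral_congr_fun measurableSet_Ioi
      intro t ht
      have h1 : (0:ℝ) ≤ (t - x) ^ (d - 1) := Real.rpow_nonneg (by linarith [ht.out]) _
      rw [hG, hH]
      simp only [nnnorm_mul, ENNReal.coe_mul]
      congr 1
      rw [← Real.enorm_eq_ofReal h1]
      rfl
    rw [step2]
    have step3 : ∫⁻ t in Set.Ioi x, G t * H (t - x)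
        = ∫⁻ t : ℝ, G t * ((Set.Ioi (0:ℝ)).indicator H) (t - x) := by
      rw [← lintegral_indicator measurableSet_Ioi]
      congr 1
      funext t
      by_cases ht : x < t
      · rw [Set.indicator_of_mem (Set.mem_Ioi.mpr ht),
          Set.indicator_of_mem (Set.mem_Ioi.mpr (sub_pos.mpr ht))]
      · rw [Set.indicator_of_notMem (fun h => ht (Set.mem_Ioi.mp h)),
          Set.indicator_of_notMem (fun h => ht (by simpa [sub_pos] using Set.mem_Ioi.mp h)),
          mul_zero]
    rw [step3]
    have hsplit : ∀ s : ℝ, (Set.Ioi (0:ℝ)).indicator H s = K1 s + K2 s := by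
      intro s
      rw [hK1, hK2]
      simp only [Set.indicator_apply, Set.mem_Ioi, Set.mem_Ioc]
      split_ifs <;> simp_all <;> linarith
    have : ∀ t : ℝ, G t * ((Set.Ioi (0:ℝ)).indicator H) (t - x)
        = G t * K1 (t - x) + G t * K2 (t - x) := by
      intro t; rw [hsplit, mul_add]
    simp only [this]
    have hm1 : Measurable fun t : ℝ => G t * K1 (t - x) :=
      hGm.mul (hK1m.comp (measurable_id.sub_const x))
    rw [lintegral_add_left hm1]
  -- kernel integrals are finite
  have hK1fin : (∫⁻ s : ℝ, K1 s) < ⊤ := by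
    rw [hK1, lintegral_indicator measurableSet_Ioc]
    have hint : IntegrableOn (fun s : ℝ => s ^ (d - 1)) (Set.Ioc 0 1) := by
      have h0 := intervalIntegral.intervalIntegrable_rpow' (r := d - 1) (a := 0) (b := 1)
        (by linarith)
      rw [intervalIntegrable_iff] at h0
      simpa [Set.uIoc_of_le (zero_le_one' ℝ)] using h0
    calc ∫⁻ s in Set.Ioc (0:ℝ) 1, H s
        ≤ ∫⁻ s in Set.Ioc (0:ℝ) 1, (‖(s : ℝ) ^ (d - 1)‖₊ : ℝ≥0∞) :=
          lintegral_ofReal_le_lintegral_enorm _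
      _ < ⊤ := hint.2
  have hK2fin : (∫⁻ s : ℝ, (K2 s) ^ α) < ⊤ := by
    have heq : ∀ s : ℝ, (K2 s) ^ α
        = (Set.Ioi (1:ℝ)).indicator (fun s => ENNReal.ofReal (s ^ ((d - 1) * α))) s := by
      intro s
      rw [hK2]
      by_cases hs : s ∈ Set.Ioi (1:ℝ)
      · rw [Set.indicator_of_mem hs, Set.indicator_of_mem hs,
          ENNReal.ofReal_rpow_of_nonneg (Real.rpow_nonneg (by linarith [hs.out]) _) hα0.le,
          ← Real.rpow_mul (by linarith [hs.out] : (0:ℝ) ≤ s)]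
      · rw [Set.indicator_of_notMem hs, Set.indicator_of_notMem hs,
          ENNReal.zero_rpow_of_pos hα0]
    simp only [heq]
    rw [lintegral_indicator measurableSet_Ioi]
    have hexp : (d - 1) * α < -1 := by
      have h1 : d - 1 < -(1 / α) := by linarith
      have := mul_lt_mul_of_pos_right h1 hα0
      rwa [neg_mul, div_mul_cancel₀ _ hα0.ne'] at this
    have hint : IntegrableOn (fun s : ℝ => s ^ ((d - 1) * α)) (Set.Ioi 1) :=
      integrableOn_Ioi_rpow_of_lt hexp one_pos
    calc ∫⁻ s in Set.Ioi (1:ℝ), ENNReal.ofReal (s ^ ((d - 1) * α))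
        ≤ ∫⁻ s in Set.Ioi (1:ℝ), (‖(s : ℝ) ^ ((d - 1) * α)‖₊ : ℝ≥0∞) :=
          lintegral_ofReal_le_lintegral_enorm _
      _ < ⊤ := hint.2
  -- integrals of G are finite
  have hG1fin : (∫⁻ t : ℝ, G t) < ⊤ := by
    have := hg1.2
    rwa [eLpNorm_one_eq_lintegral_enorm] at this
  have hGαfin : (∫⁻ t : ℝ, (G t) ^ α) < ⊤ := by
    have h := hgα.2
    rw [eLpNorm_eq_lintegral_rpow_enorm_toReal (ENNReal.ofReal_pos.mpr hα0).ne' ENNReal.ofReal_ne_top,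
      ENNReal.toReal_ofReal hα0.le] at h
    by_contra hcon
    push_neg at hcon
    rw [top_le_iff] at hcon
    change (∫⁻ t : ℝ, (G t) ^ α) ^ (1 / α) < ⊤ at h
    rw [hcon, ENNReal.top_rpow_of_pos (by positivity)] at h
    exact (lt_irrefl _ h).elim
  -- F2 bound
  have hB2 : (∫⁻ x : ℝ, (F2 x) ^ α) < ⊤ := by
    refine lt_of_le_of_lt (young_aux hpq G K2 hGm hK2m) ?_
    exact ENNReal.mul_lt_top
      (ENNReal.rpow_lt_top_of_nonneg (div_nonneg hα0.le hpq.symm.nonneg) hG1fin.ne)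
      (ENNReal.mul_lt_top hG1fin hK2fin)
  -- F1 bound, via reflection
  have hB1 : (∫⁻ x : ℝ, (F1 x) ^ α) < ⊤ := by
    set F1' : ℝ → ℝ≥0∞ := fun y => ∫⁻ u : ℝ, K1 u * G (u - y) with hF1'
    have hrefl : ∀ x : ℝ, F1 x = F1' (-x) := by
      intro x
      have hm1 : Measurable fun t : ℝ => G t * K1 (t - x) :=
        hGm.mul (hK1m.comp (measurable_id.sub_const x))
      have hcomp := (measurePreserving_add_right (volume : Measure ℝ) x).lintegral_comp hm1
      show (∫⁻ t : ℝ, G t * K1 (t - x)) = ∫⁻ u : ℝ, K1 u * G (u - (-x))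
      rw [← hcomp]
      congr 1
      funext u
      simp only [add_sub_cancel_right, sub_neg_eq_add]
      exact mul_comm _ _
    have hF1'm : Measurable F1' := by
      apply Measurable.lintegral_prod_right
      exact (hK1m.comp measurable_snd).mul (hGm.comp (measurable_snd.sub measurable_fst))
    have : (∫⁻ x : ℝ, (F1 x) ^ α) = ∫⁻ y : ℝ, (F1' y) ^ α := by
      simp only [hrefl]
      exact (Measure.measurePreserving_neg (volume : Measure ℝ)).lintegral_comp
        (hF1'm.pow_const α)
    rw [this]
    refine lt_of_le_of_lt (young_aux hpq K1 G hK1m hGm) ?_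
    exact ENNReal.mul_lt_top
      (ENNReal.rpow_lt_top_of_nonneg (div_nonneg hα0.le hpq.symm.nonneg) hK1fin.ne)
      (ENNReal.mul_lt_top hK1fin hGαfin)
  -- assemble
  have CΓ : C ^ α * 2 ^ α ≠ ⊤ :=
    (ENNReal.mul_lt_top (ENNReal.rpow_lt_top_of_nonneg hα0.le ENNReal.ofReal_ne_top)
      (ENNReal.rpow_lt_top_of_nonneg hα0.le (by norm_num))).ne
  calc ∫⁻ x : ℝ, ENNReal.ofReal (|RLright d g x| ^ α)
      ≤ ∫⁻ x : ℝ, (C * (F1 x + F2 x)) ^ α := lintegral_mono claim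
    _ ≤ ∫⁻ x : ℝ, C ^ α * 2 ^ α * ((F1 x) ^ α + (F2 x) ^ α) := by
        apply lintegral_mono
        intro x
        show (C * (F1 x + F2 x)) ^ α ≤ C ^ α * 2 ^ α * ((F1 x) ^ α + (F2 x) ^ α)
        rw [ENNReal.mul_rpow_of_nonneg _ _ hα0.le, mul_assoc]
        apply mul_le_mul_right
        have hsum : F1 x + F2 x ≤ 2 * (F1 x ⊔ F2 x) := by
          rw [two_mul]; exact add_le_add le_sup_left le_sup_right
        calc (F1 x + F2 x) ^ α ≤ (2 * (F1 x ⊔ F2 x)) ^ α := ENNReal.rpow_le_rpow hsum hα0.le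
          _ = 2 ^ α * (F1 x ⊔ F2 x) ^ α := ENNReal.mul_rpow_of_nonneg _ _ hα0.le
          _ ≤ 2 ^ α * ((F1 x) ^ α + (F2 x) ^ α) := by
              apply mul_le_mul_right
              rcases le_total (F1 x) (F2 x) with h | h
              · rw [sup_eq_right.mpr h]; exact le_add_self
              · rw [sup_eq_left.mpr h]; exact self_le_add_right _ _
    _ = C ^ α * 2 ^ α * ∫⁻ x : ℝ, ((F1 x) ^ α + (F2 x) ^ α) :=
        lintegral_const_mul' _ _ CΓ
    _ < ⊤ := by
        rw [lintegral_add_left (hF1m.pow_const α)]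
        exact ENNReal.mul_lt_top (lt_of_le_of_ne (le_top) CΓ) (ENNReal.add_lt_top.mpr ⟨hB1, hB2⟩)
end

section
/- Let 1 < α < 2 and d ∈ (0, 1 − 1/α). If g ∈ L^1(ℝ) ∩ L^α(ℝ), then ∫_ℝ |(I_+^d g)(x)|^α dx < ∞, i.e., the left-sided Riemann–Liouville fractional integral I_+^d g belongs to L^α(ℝ). -/
open MeasureTheory ENNReal

lemma shift_lint {k : ℝ → ℝ≥0∞} (hk : Measurable k) (x : ℝ) :
    ∫⁻ t : ℝ, k (x - t) = ∫⁻ s : ℝ, k s := by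
  have h2 : ∫⁻ t : ℝ, k (x + (-t)) = ∫⁻ s : ℝ, k (x + s) :=
    (Measure.measurePreserving_neg (volume : Measure ℝ)).lintegral_comp
      (hk.comp (measurable_const.add measurable_id))
  simp only [← sub_eq_add_neg] at h2
  rw [h2, lintegral_add_left_eq_self k x]

lemma young_one {α : ℝ} (hα : 1 < α) {k G : ℝ → ℝ≥0∞} (hk : Measurable k) (hG : Measurable G) :
    ∫⁻ x : ℝ, (∫⁻ t : ℝ, k (x - t) * G t) ^ α ≤ (∫⁻ s : ℝ, k s) ^ α * ∫⁻ t : ℝ, G t ^ α := by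
  have hα0 : (0:ℝ) < α := lt_trans one_pos hα
  set q : ℝ := α.conjExponent with hqdef
  have hq : q.HolderConjugate α := (Real.HolderConjugate.conjExponent hα).symm
  have hmk : ∀ x : ℝ, Measurable fun t : ℝ => k (x - t) := fun x =>
    hk.comp (measurable_const.sub measurable_id)
  have key : ∀ x : ℝ, (∫⁻ t, k (x - t) * G t) ^ α
      ≤ (∫⁻ s, k s) ^ (α - 1) * ∫⁻ t, k (x - t) * G t ^ α := by
    intro x
    have hsplit : (fun t => k (x - t) * G t)
        = fun t => (k (x - t) ^ (1/q)) * (k (x - t) ^ (1/α) * G t) := by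
      funext t
      rw [← mul_assoc, ← ENNReal.rpow_add_of_nonneg _ _ (le_of_lt (one_div_pos.mpr hq.pos))
        (le_of_lt (one_div_pos.mpr hα0)), one_div, one_div, hq.inv_add_inv_eq_one,
        ENNReal.rpow_one]
    have hH := ENNReal.lintegral_mul_le_Lp_mul_Lq (volume : Measure ℝ) hq
      (f := fun t => k (x - t) ^ (1/q)) (g := fun t => k (x - t) ^ (1/α) * G t)
      ((hmk x).pow_const _).aemeasurable (((hmk x).pow_const _).mul hG).aemeasurable
    simp only [Pi.mul_apply] at hH
    rw [← hsplit] at hH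
    have e1 : (∫⁻ t, (k (x - t) ^ (1/q)) ^ q) = ∫⁻ s, k s := by
      rw [← shift_lint hk x]
      refine lintegral_congr fun t => ?_
      rw [← ENNReal.rpow_mul, one_div_mul_cancel hq.ne_zero, ENNReal.rpow_one]
    have e2 : (∫⁻ t, (k (x - t) ^ (1/α) * G t) ^ α) = ∫⁻ t, k (x - t) * G t ^ α := by
      refine lintegral_congr fun t => ?_
      rw [ENNReal.mul_rpow_of_nonneg _ _ (le_of_lt hα0), ← ENNReal.rpow_mul,
        one_div_mul_cancel (ne_of_gt hα0), ENNReal.rpow_one]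
    rw [e1, e2] at hH
    calc (∫⁻ t, k (x - t) * G t) ^ α
        ≤ ((∫⁻ s, k s) ^ (1/q) * (∫⁻ t, k (x - t) * G t ^ α) ^ (1/α)) ^ α :=
          ENNReal.rpow_le_rpow hH (le_of_lt hα0)
      _ = (∫⁻ s, k s) ^ (α - 1) * ∫⁻ t, k (x - t) * G t ^ α := by
          rw [ENNReal.mul_rpow_of_nonneg _ _ (le_of_lt hα0), ← ENNReal.rpow_mul,
            ← ENNReal.rpow_mul, one_div_mul_cancel (ne_of_gt hα0), ENNReal.rpow_one]
          congr 2
          rw [hqdef, Real.conjExponent]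
          field_simp
  have hswap : (∫⁻ x, ∫⁻ t, k (x - t) * G t ^ α) = (∫⁻ s, k s) * ∫⁻ t, G t ^ α := by
    rw [lintegral_lintegral_swap]
    · have : ∀ t : ℝ, (∫⁻ x, k (x - t) * G t ^ α) = (∫⁻ s, k s) * G t ^ α := by
        intro t
        have hm : Measurable fun x : ℝ => k (x - t) :=
          hk.comp (measurable_id.sub measurable_const)
        rw [lintegral_mul_const _ hm, lintegral_sub_right_eq_self k t]
      simp_rw [this]
      rw [lintegral_const_mul _ (hG.pow_const _)]
    · exact ((hk.comp ((measurable_fst).sub measurable_snd)).mul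
        ((hG.pow_const _).comp measurable_snd)).aemeasurable
  calc ∫⁻ x, (∫⁻ t, k (x - t) * G t) ^ α
      ≤ ∫⁻ x, (∫⁻ s, k s) ^ (α - 1) * ∫⁻ t, k (x - t) * G t ^ α := lintegral_mono key
    _ = (∫⁻ s, k s) ^ (α - 1) * ∫⁻ x, ∫⁻ t, k (x - t) * G t ^ α := by
        rw [lintegral_const_mul]
        exact (Measurable.lintegral_prod_right
          ((hk.comp ((measurable_fst).sub measurable_snd)).mul
            ((hG.pow_const _).comp measurable_snd)))
    _ = (∫⁻ s, k s) ^ (α - 1) * ((∫⁻ s, k s) * ∫⁻ t, G t ^ α) := by rw [hswap]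
    _ = (∫⁻ s, k s) ^ α * ∫⁻ t, G t ^ α := by
        rw [← mul_assoc]
        congr 1
        calc (∫⁻ s, k s) ^ (α - 1) * ∫⁻ s, k s
            = (∫⁻ s, k s) ^ (α - 1) * (∫⁻ s, k s) ^ (1:ℝ) := by rw [ENNReal.rpow_one]
          _ = (∫⁻ s, k s) ^ ((α - 1) + 1) :=
              (ENNReal.rpow_add_of_nonneg _ _ (by linarith) zero_le_one).symm
          _ = (∫⁻ s, k s) ^ α := by norm_num

lemma young_two {α : ℝ} (hα : 1 < α) {k G : ℝ → ℝ≥0∞} (hk : Measurable k) (hG : Measurable G) :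
    ∫⁻ x : ℝ, (∫⁻ t : ℝ, k (x - t) * G t) ^ α ≤ (∫⁻ s : ℝ, k s ^ α) * (∫⁻ t : ℝ, G t) ^ α := by
  have hα0 : (0:ℝ) < α := lt_trans one_pos hα
  set q : ℝ := α.conjExponent with hqdef
  have hq : α.HolderConjugate q := Real.HolderConjugate.conjExponent hα
  have hmk : ∀ x : ℝ, Measurable fun t : ℝ => k (x - t) := fun x =>
    hk.comp (measurable_const.sub measurable_id)
  have key : ∀ x : ℝ, (∫⁻ t, k (x - t) * G t) ^ α
      ≤ (∫⁻ t, k (x - t) ^ α * G t) * (∫⁻ t, G t) ^ (α - 1) := by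
    intro x
    have hsplit : (fun t => k (x - t) * G t)
        = fun t => (k (x - t) * G t ^ (1/α)) * (G t ^ (1/q)) := by
      funext t
      rw [mul_assoc, ← ENNReal.rpow_add_of_nonneg _ _ (le_of_lt (one_div_pos.mpr hα0))
        (le_of_lt (one_div_pos.mpr hq.symm.pos)), one_div, one_div, hq.inv_add_inv_eq_one,
        ENNReal.rpow_one]
    have hH := ENNReal.lintegral_mul_le_Lp_mul_Lq (volume : Measure ℝ) hq
      (f := fun t => k (x - t) * G t ^ (1/α)) (g := fun t => G t ^ (1/q))
      ((hmk x).mul (hG.pow_const _)).aemeasurable (hG.pow_const _).aemeasurable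
    simp only [Pi.mul_apply] at hH
    rw [← hsplit] at hH
    have e1 : (∫⁻ t, (k (x - t) * G t ^ (1/α)) ^ α) = ∫⁻ t, k (x - t) ^ α * G t := by
      refine lintegral_congr fun t => ?_
      rw [ENNReal.mul_rpow_of_nonneg _ _ (le_of_lt hα0), ← ENNReal.rpow_mul,
        one_div_mul_cancel (ne_of_gt hα0), ENNReal.rpow_one]
    have e2 : (∫⁻ t, (G t ^ (1/q)) ^ q) = ∫⁻ t, G t := by
      refine lintegral_congr fun t => ?_
      rw [← ENNReal.rpow_mul, one_div_mul_cancel hq.symm.ne_zero, ENNReal.rpow_one]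
    rw [e1, e2] at hH
    calc (∫⁻ t, k (x - t) * G t) ^ α
        ≤ ((∫⁻ t, k (x - t) ^ α * G t) ^ (1/α) * (∫⁻ t, G t) ^ (1/q)) ^ α :=
          ENNReal.rpow_le_rpow hH (le_of_lt hα0)
      _ = (∫⁻ t, k (x - t) ^ α * G t) * (∫⁻ t, G t) ^ (α - 1) := by
          rw [ENNReal.mul_rpow_of_nonneg _ _ (le_of_lt hα0), ← ENNReal.rpow_mul,
            ← ENNReal.rpow_mul, one_div_mul_cancel (ne_of_gt hα0), ENNReal.rpow_one]
          congr 2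
          rw [hqdef, Real.conjExponent]
          field_simp
  have hswap : (∫⁻ x, ∫⁻ t, k (x - t) ^ α * G t) = (∫⁻ s, k s ^ α) * ∫⁻ t, G t := by
    rw [lintegral_lintegral_swap]
    · have : ∀ t : ℝ, (∫⁻ x, k (x - t) ^ α * G t) = (∫⁻ s, k s ^ α) * G t := by
        intro t
        have hm : Measurable fun x : ℝ => k (x - t) ^ α :=
          (hk.comp (measurable_id.sub measurable_const)).pow_const _
        rw [lintegral_mul_const _ hm,
          lintegral_sub_right_eq_self (fun s => k s ^ α) t]
      simp_rw [this]
      exact lintegral_const_mul _ hG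
    · exact (((hk.comp ((measurable_fst).sub measurable_snd)).pow_const _).mul
        (hG.comp measurable_snd)).aemeasurable
  calc ∫⁻ x, (∫⁻ t, k (x - t) * G t) ^ α
      ≤ ∫⁻ x, (∫⁻ t, k (x - t) ^ α * G t) * (∫⁻ t, G t) ^ (α - 1) := lintegral_mono key
    _ = (∫⁻ x, ∫⁻ t, k (x - t) ^ α * G t) * (∫⁻ t, G t) ^ (α - 1) := by
        rw [lintegral_mul_const]
        exact Measurable.lintegral_prod_right
          (((hk.comp ((measurable_fst).sub measurable_snd)).pow_const _).mul
            (hG.comp measurable_snd))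
    _ = ((∫⁻ s, k s ^ α) * ∫⁻ t, G t) * (∫⁻ t, G t) ^ (α - 1) := by rw [hswap]
    _ = (∫⁻ s, k s ^ α) * (∫⁻ t, G t) ^ α := by
        rw [mul_assoc]
        congr 1
        calc (∫⁻ t, G t) * (∫⁻ t, G t) ^ (α - 1)
            = (∫⁻ t, G t) ^ (1:ℝ) * (∫⁻ t, G t) ^ (α - 1) := by rw [ENNReal.rpow_one]
          _ = (∫⁻ t, G t) ^ (1 + (α - 1)) :=
              (ENNReal.rpow_add_of_nonneg _ _ zero_le_one (by linarith)).symm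
          _ = (∫⁻ t, G t) ^ α := by norm_num

/-- The left-sided Riemann–Liouville fractional integral of order `d`. -/
noncomputable def RLleft (d : ℝ) (f : ℝ → ℝ) (x : ℝ) : ℝ :=
  (1 / Real.Gamma d) * ∫ t in Set.Iio x, f t * (x - t) ^ (d - 1)

/-- if `g ∈ L^1(ℝ) ∩ L^α(ℝ)`, then `∫ |(I_+^d g)(x)|^α dx < ∞`. -/
theorem stmt5 (α d : ℝ) (hα : 1 < α ∧ α < 2)
    (hd : d ∈ Set.Ioo (0 : ℝ) (1 - 1 / α))
    (g : ℝ → ℝ) (hg : Measurable g)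
    (hg1 : MemLp g 1 (volume : Measure ℝ))
    (hgα : MemLp g (ENNReal.ofReal α) (volume : Measure ℝ)) :
    ∫⁻ x : ℝ, ENNReal.ofReal (|RLleft d g x| ^ α) < ⊤ := by
  obtain ⟨hα1, hα2⟩ := hα
  obtain ⟨hd0, hd1⟩ := hd
  have hα0 : (0:ℝ) < α := lt_trans one_pos hα1
  have hΓ : 0 < Real.Gamma d := Real.Gamma_pos_of_pos hd0
  set C : ℝ := 1 / Real.Gamma d with hCdef
  have hC : 0 ≤ C := le_of_lt (by positivity)
  set G : ℝ → ℝ≥0∞ := fun t => ENNReal.ofReal |g t| with hGdef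
  have hGmeas : Measurable G := ENNReal.measurable_ofReal.comp hg.abs
  set φ : ℝ → ℝ≥0∞ := fun s => ENNReal.ofReal (s ^ (d - 1)) with hφdef
  have hφmeas : Measurable φ :=
    ENNReal.measurable_ofReal.comp (measurable_id.pow_const _)
  set k : ℝ → ℝ≥0∞ := fun s => if 0 < s then φ s else 0 with hkdef
  have hkmeas : Measurable k := hφmeas.ite measurableSet_Ioi measurable_const
  set k₁ : ℝ → ℝ≥0∞ := (Set.Ioc (0:ℝ) 1).indicator φ with hk₁def
  set k₂ : ℝ → ℝ≥0∞ := (Set.Ioi (1:ℝ)).indicator φ with hk₂def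
  have hk₁meas : Measurable k₁ := hφmeas.indicator measurableSet_Ioc
  have hk₂meas : Measurable k₂ := hφmeas.indicator measurableSet_Ioi
  have hk12 : ∀ s, k s = k₁ s + k₂ s := by
    intro s
    by_cases h1 : 0 < s
    · by_cases h2 : s ≤ 1
      · rw [hkdef, hk₁def, hk₂def]
        simp [Set.indicator, h1, h2, not_lt.mpr h2]
      · rw [hkdef, hk₁def, hk₂def]
        simp [Set.indicator, h1, h2, lt_of_not_ge h2]
    · rw [hkdef, hk₁def, hk₂def]
      have h3 : ¬ (1:ℝ) < s := fun h => h1 (lt_trans one_pos h)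
      simp [Set.indicator, h1, h3, Set.mem_Ioc, Set.mem_Ioi]
  -- pointwise bound
  have hpt : ∀ x : ℝ, ENNReal.ofReal (|RLleft d g x| ^ α)
      ≤ ENNReal.ofReal (C ^ α) * (∫⁻ t, k (x - t) * G t) ^ α := by
    intro x
    have hker : (∫⁻ t in Set.Iio x, (‖g t * (x - t) ^ (d - 1)‖₊ : ℝ≥0∞))
        = ∫⁻ t, k (x - t) * G t := by
      rw [← lintegral_indicator measurableSet_Iio]
      refine lintegral_congr fun t => ?_
      by_cases ht : t < x
      · rw [Set.indicator_of_mem (by exact ht : t ∈ Set.Iio x)]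
        have hxt : (0:ℝ) < x - t := by linarith
        have hnn : (0:ℝ) ≤ (x - t) ^ (d - 1) := Real.rpow_nonneg (le_of_lt hxt) _
        rw [← enorm_eq_nnnorm, Real.enorm_eq_ofReal_abs, abs_mul, abs_of_nonneg hnn,
          ENNReal.ofReal_mul (abs_nonneg _), hkdef]
        simp only [if_pos hxt]
        rw [mul_comm]
      · rw [Set.indicator_of_notMem (by exact ht : t ∉ Set.Iio x)]
        have hxt : ¬ (0:ℝ) < x - t := by intro h; exact ht (by linarith)
        have hk0 : k (x - t) = 0 := by simp only [hkdef]; exact if_neg hxt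
        rw [hk0, zero_mul]
    have h1 : ENNReal.ofReal |RLleft d g x| ≤ ENNReal.ofReal C * ∫⁻ t, k (x - t) * G t := by
      rw [RLleft, abs_mul, abs_of_nonneg hC, ENNReal.ofReal_mul hC]
      refine mul_le_mul_right ?_ _
      calc ENNReal.ofReal |∫ t in Set.Iio x, g t * (x - t) ^ (d - 1)|
          = (‖∫ t in Set.Iio x, g t * (x - t) ^ (d - 1)‖₊ : ℝ≥0∞) :=
            (Real.enorm_eq_ofReal_abs _).symm
        _ ≤ ∫⁻ t in Set.Iio x, (‖g t * (x - t) ^ (d - 1)‖₊ : ℝ≥0∞) :=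
            enorm_integral_le_lintegral_enorm _
        _ = ∫⁻ t, k (x - t) * G t := hker
    calc ENNReal.ofReal (|RLleft d g x| ^ α)
        = ENNReal.ofReal |RLleft d g x| ^ α :=
          (ENNReal.ofReal_rpow_of_nonneg (abs_nonneg _) (le_of_lt hα0)).symm
      _ ≤ (ENNReal.ofReal C * ∫⁻ t, k (x - t) * G t) ^ α :=
          ENNReal.rpow_le_rpow h1 (le_of_lt hα0)
      _ = ENNReal.ofReal (C ^ α) * (∫⁻ t, k (x - t) * G t) ^ α := by
          rw [ENNReal.mul_rpow_of_nonneg _ _ (le_of_lt hα0),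
            ENNReal.ofReal_rpow_of_nonneg hC (le_of_lt hα0)]
  -- finiteness facts
  have hG1 : ∫⁻ t, G t < ⊤ := by
    have h := hg1.2
    rw [eLpNorm_one_eq_lintegral_enorm] at h
    simpa [hGdef, Real.enorm_eq_ofReal_abs] using h
  have hGα : ∫⁻ t, G t ^ α < ⊤ := by
    have h := hgα.2
    rw [eLpNorm_eq_lintegral_rpow_enorm_toReal (by simp [ENNReal.ofReal_eq_zero]; linarith)
      ENNReal.ofReal_ne_top, ENNReal.toReal_ofReal (le_of_lt hα0)] at h
    have h2 := (ENNReal.rpow_lt_top_iff_of_pos (by positivity : (0:ℝ) < 1/α)).mp h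
    simpa [hGdef, Real.enorm_eq_ofReal_abs] using h2
  have hIk₁ : ∫⁻ s, k₁ s < ⊤ := by
    rw [hk₁def, lintegral_indicator measurableSet_Ioc]
    have hint : IntegrableOn (fun s : ℝ => s ^ (d - 1)) (Set.Ioo (0:ℝ) 2) :=
      (intervalIntegral.integrableOn_Ioo_rpow_iff two_pos).mpr (by linarith)
    calc ∫⁻ s in Set.Ioc (0:ℝ) 1, φ s
        ≤ ∫⁻ s in Set.Ioo (0:ℝ) 2, φ s :=
          lintegral_mono_set (fun s hs => ⟨hs.1, lt_of_le_of_lt hs.2 one_lt_two⟩)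
      _ ≤ ∫⁻ s in Set.Ioo (0:ℝ) 2, (‖s ^ (d - 1)‖₊ : ℝ≥0∞) := by
          refine lintegral_mono fun s => ?_
          rw [hφdef, ← enorm_eq_nnnorm, Real.enorm_eq_ofReal_abs]
          exact ENNReal.ofReal_le_ofReal (le_abs_self _)
      _ < ⊤ := hint.2
  have hIk₂ : ∫⁻ s, k₂ s ^ α < ⊤ := by
    have hexp : (d - 1) * α < -1 := by
      have h := mul_lt_mul_of_pos_right (by linarith : d - 1 < -(1/α)) hα0
      rwa [neg_mul, one_div, inv_mul_cancel₀ (ne_of_gt hα0)] at h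
    have hrw : ∀ s, k₂ s ^ α
        = (Set.Ioi (1:ℝ)).indicator (fun s => ENNReal.ofReal (s ^ ((d - 1) * α))) s := by
      intro s
      by_cases hs : 1 < s
      · rw [hk₂def, Set.indicator_of_mem (by exact hs), Set.indicator_of_mem (by exact hs),
          hφdef]
        have hs0 : (0:ℝ) ≤ s := by linarith
        rw [ENNReal.ofReal_rpow_of_nonneg (Real.rpow_nonneg hs0 _) (le_of_lt hα0),
          ← Real.rpow_mul hs0]
      · rw [hk₂def, Set.indicator_of_notMem (by exact hs), Set.indicator_of_notMem (by exact hs)]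
        exact ENNReal.zero_rpow_of_pos hα0
    rw [lintegral_congr hrw, lintegral_indicator measurableSet_Ioi]
    have hint : IntegrableOn (fun s : ℝ => s ^ ((d - 1) * α)) (Set.Ioi (1:ℝ)) :=
      integrableOn_Ioi_rpow_of_lt hexp one_pos
    calc ∫⁻ s in Set.Ioi (1:ℝ), ENNReal.ofReal (s ^ ((d - 1) * α))
        ≤ ∫⁻ s in Set.Ioi (1:ℝ), (‖s ^ ((d - 1) * α)‖₊ : ℝ≥0∞) := by
          refine lintegral_mono fun s => ?_
          rw [← enorm_eq_nnnorm, Real.enorm_eq_ofReal_abs]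
          exact ENNReal.ofReal_le_ofReal (le_abs_self _)
      _ < ⊤ := hint.2
  -- measurability of the convolutions
  have hm1 : Measurable fun x : ℝ => ∫⁻ t, k₁ (x - t) * G t :=
    Measurable.lintegral_prod_right
      ((hk₁meas.comp (measurable_fst.sub measurable_snd)).mul (hGmeas.comp measurable_snd))
  have hm2 : Measurable fun x : ℝ => ∫⁻ t, k₂ (x - t) * G t :=
    Measurable.lintegral_prod_right
      ((hk₂meas.comp (measurable_fst.sub measurable_snd)).mul (hGmeas.comp measurable_snd))
  -- splitting
  have hFsplit : ∀ x : ℝ, (∫⁻ t, k (x - t) * G t)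
      = (∫⁻ t, k₁ (x - t) * G t) + ∫⁻ t, k₂ (x - t) * G t := by
    intro x
    have hmx : Measurable fun t : ℝ => k₁ (x - t) * G t :=
      (hk₁meas.comp (measurable_const.sub measurable_id)).mul hGmeas
    rw [← lintegral_add_left hmx]
    refine lintegral_congr fun t => ?_
    rw [hk12 (x - t), add_mul]
  have h2split : ∀ a b : ℝ≥0∞, (a + b) ^ α ≤ (2:ℝ≥0∞) ^ α * (a ^ α + b ^ α) := by
    intro a b
    calc (a + b) ^ α ≤ ((2:ℝ≥0∞) * max a b) ^ α := by
          refine ENNReal.rpow_le_rpow ?_ (le_of_lt hα0)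
          rw [two_mul]
          exact add_le_add (le_max_left a b) (le_max_right a b)
      _ = (2:ℝ≥0∞) ^ α * (max a b) ^ α := ENNReal.mul_rpow_of_nonneg _ _ (le_of_lt hα0)
      _ ≤ (2:ℝ≥0∞) ^ α * (a ^ α + b ^ α) := by
          refine mul_le_mul_right ?_ _
          rcases le_total a b with h | h
          · rw [max_eq_right h]; exact le_add_self
          · rw [max_eq_left h]; exact self_le_add_right _ _
  -- main estimate
  have hmain : ∫⁻ x, (∫⁻ t, k (x - t) * G t) ^ α < ⊤ := by
    have hb1 : ∫⁻ x, (∫⁻ t, k₁ (x - t) * G t) ^ α < ⊤ := by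
      refine lt_of_le_of_lt (young_one hα1 hk₁meas hGmeas) ?_
      exact ENNReal.mul_lt_top (ENNReal.rpow_lt_top_of_nonneg (le_of_lt hα0) hIk₁.ne) hGα
    have hb2 : ∫⁻ x, (∫⁻ t, k₂ (x - t) * G t) ^ α < ⊤ := by
      refine lt_of_le_of_lt (young_two hα1 hk₂meas hGmeas) ?_
      exact ENNReal.mul_lt_top hIk₂ (ENNReal.rpow_lt_top_of_nonneg (le_of_lt hα0) hG1.ne)
    calc ∫⁻ x, (∫⁻ t, k (x - t) * G t) ^ α
        = ∫⁻ x, ((∫⁻ t, k₁ (x - t) * G t) + ∫⁻ t, k₂ (x - t) * G t) ^ α := by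
          refine lintegral_congr fun x => ?_; rw [hFsplit x]
      _ ≤ ∫⁻ x, (2:ℝ≥0∞) ^ α * ((∫⁻ t, k₁ (x - t) * G t) ^ α + (∫⁻ t, k₂ (x - t) * G t) ^ α) :=
          lintegral_mono fun x => h2split _ _
      _ = (2:ℝ≥0∞) ^ α * ∫⁻ x, ((∫⁻ t, k₁ (x - t) * G t) ^ α + (∫⁻ t, k₂ (x - t) * G t) ^ α) :=
          lintegral_const_mul _ ((hm1.pow_const _).add (hm2.pow_const _))
      _ = (2:ℝ≥0∞) ^ α * ((∫⁻ x, (∫⁻ t, k₁ (x - t) * G t) ^ α)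
            + ∫⁻ x, (∫⁻ t, k₂ (x - t) * G t) ^ α) := by
          rw [lintegral_add_left (hm1.pow_const _)]
      _ < ⊤ := by
          refine ENNReal.mul_lt_top ?_ (ENNReal.add_lt_top.mpr ⟨hb1, hb2⟩)
          exact ENNReal.rpow_lt_top_of_nonneg (le_of_lt hα0) ENNReal.ofNat_ne_top
  calc ∫⁻ x, ENNReal.ofReal (|RLleft d g x| ^ α)
      ≤ ∫⁻ x, ENNReal.ofReal (C ^ α) * (∫⁻ t, k (x - t) * G t) ^ α := lintegral_mono hpt
    _ = ENNReal.ofReal (C ^ α) * ∫⁻ x, (∫⁻ t, k (x - t) * G t) ^ α :=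
        lintegral_const_mul' _ _ ENNReal.ofReal_ne_top
    _ < ⊤ := ENNReal.mul_lt_top ENNReal.ofReal_lt_top hmain
end

section
/- Let 1 < α < 2 and d ∈ (0, 1 − 1/α). There exist constants M = 1/(Γ(d) · (α(1−d) − 1)^{1/α}) > 0 and N = 1/(Γ(d) · d) > 0 such that for every g ∈ L^1(ℝ) ∩ L^α(ℝ), ‖I_-^d g‖_α ≤ M ‖g‖_1 + N ‖g‖_α. -/
open MeasureTheory Set
open scoped ENNReal

lemma lint_shift (f : ℝ → ℝ≥0∞) (hf : Measurable f) (u : ℝ) :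
    ∫⁻ x, f (x + u) = ∫⁻ x, f x := by
  conv_rhs => rw [← map_add_right_eq_self volume u]
  rw [lintegral_map hf (measurable_add_const u)]

lemma lint_Ioi_shift (H : ℝ → ℝ≥0∞) (hH : Measurable H) (x : ℝ) :
    ∫⁻ t in Set.Ioi x, H t = ∫⁻ u in Set.Ioi 0, H (x + u) := by
  rw [← lintegral_indicator measurableSet_Ioi _, ← lintegral_indicator measurableSet_Ioi _]
  rw [← lint_shift ((Set.Ioi x).indicator H) (hH.indicator measurableSet_Ioi) x]
  refine lintegral_congr fun u => ?_
  by_cases h : 0 < u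
  · simp [Set.indicator_of_mem, h, Set.mem_Ioi, add_comm, lt_add_of_pos_left x h]
  · rw [Set.indicator_of_notMem (by simpa using h), Set.indicator_of_notMem]
    simp only [Set.mem_Ioi]
    intro hc
    exact h (by linarith)

/-- Young-type bound, `L^α` side: the kernel is in `L¹(s)`. -/
lemma youngA {α : ℝ} (hα : 1 < α) (G k : ℝ → ℝ≥0∞) (hG : Measurable G) (hk : Measurable k)
    {s : Set ℝ} (hs : MeasurableSet s) :
    ∫⁻ x, (∫⁻ u in s, G (x + u) * k u) ^ α ≤
      (∫⁻ u in s, k u) ^ α * ∫⁻ x, (G x) ^ α := by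
  set β : ℝ := Real.conjExponent α with hβ
  have hconj : α.HolderConjugate β := Real.HolderConjugate.conjExponent hα
  have hsum : 1 / β + 1 / α = 1 := by
    rw [one_div, one_div]; rw [add_comm]; exact hconj.inv_add_inv_eq_one
  have hβ0 : 0 < β := hconj.symm.pos
  have hα0 : (0:ℝ) < α := hconj.pos
  set A : ℝ≥0∞ := ∫⁻ u in s, k u with hA
  set Iα : ℝ≥0∞ := ∫⁻ x, (G x) ^ α with hIα
  set W : ℝ → ℝ≥0∞ := fun x => ∫⁻ u in s, k u * G (x + u) ^ α with hW
  have hWmeas : Measurable W := by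
    apply Measurable.lintegral_prod_right'
      (f := fun p : ℝ × ℝ => k p.2 * G (p.1 + p.2) ^ α)
    fun_prop
  -- pointwise Hölder
  have hpt : ∀ x, (∫⁻ u in s, G (x + u) * k u) ≤ A ^ (1/β) * (W x) ^ (1/α) := by
    intro x
    have hrw : (∫⁻ u in s, G (x + u) * k u) =
        ∫⁻ u in s, ((fun u => (k u) ^ (1/β)) * (fun u => (k u) ^ (1/α) * G (x + u))) u := by
      refine lintegral_congr fun u => ?_
      simp only [Pi.mul_apply]
      rw [← mul_assoc, ← ENNReal.rpow_add_of_nonneg _ _ (by positivity) (by positivity),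
        hsum, ENNReal.rpow_one, mul_comm]
    rw [hrw]
    have hH := ENNReal.lintegral_mul_le_Lp_mul_Lq (volume.restrict s) hconj.symm
      (f := fun u => (k u) ^ (1/β)) (g := fun u => (k u) ^ (1/α) * G (x + u))
      (by fun_prop) (by fun_prop)
    refine hH.trans (le_of_eq ?_)
    congr 1
    · congr 1
      refine lintegral_congr fun u => ?_
      rw [← ENNReal.rpow_mul, one_div_mul_cancel hβ0.ne', ENNReal.rpow_one]
    · congr 1
      refine lintegral_congr fun u => ?_
      rw [ENNReal.mul_rpow_of_nonneg _ _ hα0.le, ← ENNReal.rpow_mul,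
        one_div_mul_cancel hα0.ne', ENNReal.rpow_one]
  -- raise to power α and integrate
  have hpt2 : ∀ x, (∫⁻ u in s, G (x + u) * k u) ^ α ≤ A ^ (α / β) * W x := by
    intro x
    calc (∫⁻ u in s, G (x + u) * k u) ^ α ≤ (A ^ (1/β) * (W x) ^ (1/α)) ^ α :=
          ENNReal.rpow_le_rpow (hpt x) hα0.le
      _ = A ^ (α / β) * W x := by
          rw [ENNReal.mul_rpow_of_nonneg _ _ hα0.le, ← ENNReal.rpow_mul, ← ENNReal.rpow_mul,
            one_div_mul_cancel hα0.ne', ENNReal.rpow_one]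
          congr 2
          field_simp
  calc ∫⁻ x, (∫⁻ u in s, G (x + u) * k u) ^ α
      ≤ ∫⁻ x, A ^ (α / β) * W x := lintegral_mono hpt2
    _ = A ^ (α / β) * ∫⁻ x, W x := lintegral_const_mul _ hWmeas
    _ = A ^ (α / β) * (A * Iα) := by
        congr 1
        rw [hW]
        rw [lintegral_lintegral_swap (by fun_prop)]
        have : ∀ u : ℝ, ∫⁻ x, k u * G (x + u) ^ α = k u * Iα := by
          intro u
          rw [lintegral_const_mul _ (by fun_prop : Measurable fun x => G (x + u) ^ α)]
          congr 1
          exact lint_shift (fun x => G x ^ α) (by fun_prop) u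
        rw [lintegral_congr this, lintegral_mul_const _ hk]
    _ = A ^ α * Iα := by
        rw [← mul_assoc]
        congr 1
        have h1 : α / β = α - 1 := hconj.div_conj_eq_sub_one
        have h2 : A ^ α = A ^ (α - 1) * A ^ (1:ℝ) := by
          rw [← ENNReal.rpow_add_of_nonneg _ _ (by linarith) zero_le_one]
          norm_num
        rw [h1, h2, ENNReal.rpow_one]

/-- Young-type bound, `L¹` side: the kernel is in `L^α(s)`. -/
lemma youngB {α : ℝ} (hα : 1 < α) (G k : ℝ → ℝ≥0∞) (hG : Measurable G) (hk : Measurable k)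
    {s : Set ℝ} (_hs : MeasurableSet s) :
    ∫⁻ x, (∫⁻ u in s, G (x + u) * k u) ^ α ≤
      (∫⁻ u in s, (k u) ^ α) * (∫⁻ x, G x) ^ α := by
  set β : ℝ := Real.conjExponent α with hβ
  have hconj : α.HolderConjugate β := Real.HolderConjugate.conjExponent hα
  have hsum : 1 / β + 1 / α = 1 := by
    rw [one_div, one_div]; rw [add_comm]; exact hconj.inv_add_inv_eq_one
  have hβ0 : 0 < β := hconj.symm.pos
  have hα0 : (0:ℝ) < α := hconj.pos
  set I1 : ℝ≥0∞ := ∫⁻ x, G x with hI1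
  set K : ℝ≥0∞ := ∫⁻ u in s, (k u) ^ α with hK
  set V : ℝ → ℝ≥0∞ := fun x => ∫⁻ u in s, G (x + u) * (k u) ^ α with hV
  have hVmeas : Measurable V := by
    apply Measurable.lintegral_prod_right'
      (f := fun p : ℝ × ℝ => G (p.1 + p.2) * k p.2 ^ α)
    fun_prop
  -- pointwise Hölder
  have hpt : ∀ x, (∫⁻ u in s, G (x + u) * k u) ≤ I1 ^ (1/β) * (V x) ^ (1/α) := by
    intro x
    have hrw : (∫⁻ u in s, G (x + u) * k u) =
        ∫⁻ u in s, ((fun u => (G (x + u)) ^ (1/β)) * (fun u => (G (x + u)) ^ (1/α) * k u)) u := by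
      refine lintegral_congr fun u => ?_
      simp only [Pi.mul_apply]
      rw [← mul_assoc, ← ENNReal.rpow_add_of_nonneg _ _ (by positivity) (by positivity),
        hsum, ENNReal.rpow_one]
    rw [hrw]
    have hH := ENNReal.lintegral_mul_le_Lp_mul_Lq (volume.restrict s) hconj.symm
      (f := fun u => (G (x + u)) ^ (1/β)) (g := fun u => (G (x + u)) ^ (1/α) * k u)
      (by fun_prop) (by fun_prop)
    refine hH.trans ?_
    have e1 : (∫⁻ u in s, ((G (x + u)) ^ (1/β)) ^ β) = ∫⁻ u in s, G (x + u) := by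
      refine lintegral_congr fun u => ?_
      rw [← ENNReal.rpow_mul, one_div_mul_cancel hβ0.ne', ENNReal.rpow_one]
    have e2 : (∫⁻ u in s, ((G (x + u)) ^ (1/α) * k u) ^ α) = V x := by
      refine lintegral_congr fun u => ?_
      rw [ENNReal.mul_rpow_of_nonneg _ _ hα0.le, ← ENNReal.rpow_mul,
        one_div_mul_cancel hα0.ne', ENNReal.rpow_one]
    rw [e1, e2]
    have hle : (∫⁻ u in s, G (x + u)) ≤ I1 := by
      refine (setLIntegral_le_lintegral s _).trans (le_of_eq ?_)
      have : ∀ u : ℝ, G (x + u) = G (u + x) := fun u => by rw [add_comm]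
      rw [lintegral_congr this]
      exact lint_shift G hG x
    exact mul_le_mul_left (ENNReal.rpow_le_rpow hle (by positivity)) _
  -- raise to power α and integrate
  have hpt2 : ∀ x, (∫⁻ u in s, G (x + u) * k u) ^ α ≤ I1 ^ (α / β) * V x := by
    intro x
    calc (∫⁻ u in s, G (x + u) * k u) ^ α ≤ (I1 ^ (1/β) * (V x) ^ (1/α)) ^ α :=
          ENNReal.rpow_le_rpow (hpt x) hα0.le
      _ = I1 ^ (α / β) * V x := by
          rw [ENNReal.mul_rpow_of_nonneg _ _ hα0.le, ← ENNReal.rpow_mul, ← ENNReal.rpow_mul,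
            one_div_mul_cancel hα0.ne', ENNReal.rpow_one]
          congr 2
          field_simp
  calc ∫⁻ x, (∫⁻ u in s, G (x + u) * k u) ^ α
      ≤ ∫⁻ x, I1 ^ (α / β) * V x := lintegral_mono hpt2
    _ = I1 ^ (α / β) * ∫⁻ x, V x := lintegral_const_mul _ hVmeas
    _ = I1 ^ (α / β) * (K * I1) := by
        congr 1
        rw [hV]
        rw [lintegral_lintegral_swap (by fun_prop)]
        have : ∀ u : ℝ, ∫⁻ x, G (x + u) * (k u) ^ α = (k u) ^ α * I1 := by
          intro u
          rw [lintegral_mul_const _ (by fun_prop : Measurable fun x => G (x + u)), mul_comm]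
          congr 1
          exact lint_shift G hG u
        rw [lintegral_congr this, lintegral_mul_const _ (hk.pow_const _)]
    _ = K * I1 ^ α := by
        rw [← mul_assoc, mul_comm (I1 ^ (α / β)) K, mul_assoc]
        congr 1
        have h1 : α / β = α - 1 := hconj.div_conj_eq_sub_one
        have h2 : I1 ^ α = I1 ^ (α - 1) * I1 ^ (1:ℝ) := by
          rw [← ENNReal.rpow_add_of_nonneg _ _ (by linarith) zero_le_one]
          norm_num
        rw [h1, h2, ENNReal.rpow_one]

lemma kernel_near {d : ℝ} (hd : 0 < d) :
    ∫⁻ u in Set.Ioc (0:ℝ) 1, ENNReal.ofReal (u ^ (d-1)) = ENNReal.ofReal (1/d) := by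
  have hint : IntegrableOn (fun u : ℝ => u ^ (d-1)) (Set.Ioc 0 1) := by
    have := (intervalIntegrable_iff_integrableOn_Ioc_of_le
      (by norm_num : (0:ℝ) ≤ 1)).mp (intervalIntegral.intervalIntegrable_rpow' (r := d - 1) (by linarith) (a := 0) (b := 1))
    exact this
  rw [← ofReal_integral_eq_lintegral_ofReal hint]
  · congr 1
    rw [← intervalIntegral.integral_of_le (by norm_num : (0:ℝ) ≤ 1)]
    rw [integral_rpow (Or.inl (by linarith))]
    rw [Real.one_rpow, Real.zero_rpow (by linarith : d - 1 + 1 ≠ 0)]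
    norm_num
  · refine (ae_restrict_iff' measurableSet_Ioc).mpr (ae_of_all _ fun u hu => ?_)
    exact Real.rpow_nonneg hu.1.le _

lemma kernel_far {d α : ℝ} (h : (d-1)*α < -1) :
    ∫⁻ u in Set.Ioi (1:ℝ), ENNReal.ofReal (u ^ ((d-1)*α)) =
      ENNReal.ofReal (1/(α*(1-d)-1)) := by
  have hint : IntegrableOn (fun u : ℝ => u ^ ((d-1)*α)) (Set.Ioi 1) :=
    integrableOn_Ioi_rpow_of_lt h one_pos
  rw [← ofReal_integral_eq_lintegral_ofReal hint]
  · congr 1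
    rw [integral_Ioi_rpow_of_lt h one_pos, Real.one_rpow]
    rw [neg_div, ← div_neg]
    ring_nf
  · refine (ae_restrict_iff' measurableSet_Ioi).mpr (ae_of_all _ fun u hu => ?_)
    exact Real.rpow_nonneg (by linarith [Set.mem_Ioi.mp hu]) _


/-- with `M = 1/(Γ(d) (α(1-d)-1)^{1/α})` and `N = 1/(Γ(d) d)`,
both positive, every `g ∈ L^1(ℝ) ∩ L^α(ℝ)` satisfies
`‖I_-^d g‖_α ≤ M ‖g‖_1 + N ‖g‖_α`. -/
theorem stmt6 (α d : ℝ) (hα : 1 < α ∧ α < 2)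
    (hd : d ∈ Set.Ioo (0 : ℝ) (1 - 1 / α)) :
    0 < 1 / (Real.Gamma d * (α * (1 - d) - 1) ^ (1 / α)) ∧
    0 < 1 / (Real.Gamma d * d) ∧
    ∀ g : ℝ → ℝ, Measurable g →
      MemLp g 1 (volume : Measure ℝ) →
      MemLp g (ENNReal.ofReal α) (volume : Measure ℝ) →
      (∫ x : ℝ, |RLright d g x| ^ α) ^ (1 / α) ≤
        (1 / (Real.Gamma d * (α * (1 - d) - 1) ^ (1 / α))) * (∫ x : ℝ, |g x|) +
          (1 / (Real.Gamma d * d)) * (∫ x : ℝ, |g x| ^ α) ^ (1 / α) := by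
  obtain ⟨hα1, hα2⟩ := hα
  obtain ⟨hd0, hd1⟩ := hd
  have hα0 : (0:ℝ) < α := by linarith
  have h1α : 1 / α < 1 - d := by linarith
  have h1d : 1 < α * (1 - d) := by
    have := mul_lt_mul_of_pos_left h1α hα0
    rwa [mul_one_div, div_self hα0.ne'] at this
  have hP : 0 < α * (1 - d) - 1 := by linarith
  have hΓ : 0 < Real.Gamma d := Real.Gamma_pos_of_pos hd0
  have hd1' : d < 1 := by
    have : 0 < 1/α := by positivity
    linarith
  have hMpos : 0 < 1 / (Real.Gamma d * (α * (1 - d) - 1) ^ (1 / α)) := by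
    have := Real.rpow_pos_of_pos hP (1/α); positivity
  have hNpos : 0 < 1 / (Real.Gamma d * d) := by positivity
  refine ⟨hMpos, hNpos, ?_⟩
  intro g hg hg1 hgα
  set c : ℝ := 1 / Real.Gamma d with hc
  have hc0 : 0 ≤ c := by positivity
  set G : ℝ → ℝ≥0∞ := fun t => ENNReal.ofReal |g t| with hG
  have hGmeas : Measurable G := by fun_prop
  set k : ℝ → ℝ≥0∞ := fun u => ENNReal.ofReal (u ^ (d - 1)) with hk
  have hkmeas : Measurable k := by fun_prop
  set Φn : ℝ → ℝ≥0∞ := fun x => ∫⁻ u in Set.Ioc 0 1, G (x + u) * k u with hΦn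
  set Φf : ℝ → ℝ≥0∞ := fun x => ∫⁻ u in Set.Ioi 1, G (x + u) * k u with hΦf
  have hΦnmeas : Measurable Φn := by
    apply Measurable.lintegral_prod_right' (f := fun p : ℝ × ℝ => G (p.1 + p.2) * k p.2)
    fun_prop
  have hΦfmeas : Measurable Φf := by
    apply Measurable.lintegral_prod_right' (f := fun p : ℝ × ℝ => G (p.1 + p.2) * k p.2)
    fun_prop
  -- Step 1: pointwise domination
  have step1 : ∀ x, ENNReal.ofReal |RLright d g x| ≤ ENNReal.ofReal c * (Φn x + Φf x) := by
    intro x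
    have hsplit : (∫⁻ u in Set.Ioi 0, G (x + u) * k u) = Φn x + Φf x := by
      rw [← Set.Ioc_union_Ioi_eq_Ioi (zero_le_one (α := ℝ))]
      exact lintegral_union measurableSet_Ioi (Set.Ioc_disjoint_Ioi le_rfl)
    rw [← hsplit]
    have h1 : ENNReal.ofReal |RLright d g x| =
        ENNReal.ofReal c * ENNReal.ofReal |∫ t in Set.Ioi x, g t * (t - x) ^ (d - 1)| := by
      rw [RLright, abs_mul, ENNReal.ofReal_mul (abs_nonneg _), abs_of_nonneg hc0]
    rw [h1]
    refine mul_le_mul_right ?_ _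
    calc ENNReal.ofReal |∫ t in Set.Ioi x, g t * (t - x) ^ (d - 1)|
        = (‖∫ t in Set.Ioi x, g t * (t - x) ^ (d - 1)‖₊ : ℝ≥0∞) := by
          rw [← enorm_eq_nnnorm, Real.enorm_eq_ofReal_abs]
      _ ≤ ∫⁻ t in Set.Ioi x, ‖g t * (t - x) ^ (d - 1)‖₊ :=
          enorm_integral_le_lintegral_enorm _
      _ = ∫⁻ t in Set.Ioi x, G t * ENNReal.ofReal ((t - x) ^ (d - 1)) := by
          refine setLIntegral_congr_fun measurableSet_Ioi (fun t ht => ?_)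
          rw [← enorm_eq_nnnorm, Real.enorm_eq_ofReal_abs, abs_mul,
            abs_of_nonneg (Real.rpow_nonneg (by simpa using sub_nonneg.mpr (le_of_lt (Set.mem_Ioi.mp ht))) _),
            ENNReal.ofReal_mul (abs_nonneg _)]
      _ = ∫⁻ u in Set.Ioi 0, G (x + u) * k u := by
          rw [lint_Ioi_shift (fun t => G t * ENNReal.ofReal ((t - x) ^ (d - 1))) (by fun_prop) x]
          refine lintegral_congr fun u => ?_
          rw [hk]
          simp [add_sub_cancel_left]
  -- the main L^α lintegral
  set L : ℝ≥0∞ := ∫⁻ x, (ENNReal.ofReal |RLright d g x|) ^ α with hL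
  set I1 : ℝ≥0∞ := ∫⁻ x, G x with hI1
  set Iα : ℝ≥0∞ := ∫⁻ x, G x ^ α with hIα
  -- kernel computations
  have hK2 : (∫⁻ u in Set.Ioc (0:ℝ) 1, k u) = ENNReal.ofReal (1/d) := kernel_near hd0
  have hK1 : (∫⁻ u in Set.Ioi (1:ℝ), (k u) ^ α) = ENNReal.ofReal (1/(α*(1-d)-1)) := by
    rw [← kernel_far (by nlinarith : (d-1)*α < -1)]
    refine setLIntegral_congr_fun measurableSet_Ioi (fun u hu => ?_)
    have hu0 : (0:ℝ) ≤ u := by have := Set.mem_Ioi.mp hu; linarith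
    rw [hk, ENNReal.ofReal_rpow_of_nonneg (Real.rpow_nonneg hu0 _) hα0.le,
      ← Real.rpow_mul hu0]

  -- conversions of the L¹ and L^α norms
  have hint1 : Integrable (fun x => |g x|) volume := (memLp_one_iff_integrable.mp hg1).abs
  have hI1v : I1 = ENNReal.ofReal (∫ x, |g x|) :=
    (ofReal_integral_eq_lintegral_ofReal hint1 (ae_of_all _ fun x => abs_nonneg _)).symm
  have hintα : Integrable (fun x => |g x| ^ α) volume := by
    have h := hgα.integrable_norm_rpow (by simp [ENNReal.ofReal_eq_zero]; linarith)
      ENNReal.ofReal_ne_top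
    simpa [ENNReal.toReal_ofReal hα0.le, Real.norm_eq_abs] using h
  have hIαv : Iα = ENNReal.ofReal (∫ x, |g x| ^ α) := by
    rw [hIα]
    have hcg : ∀ x : ℝ, G x ^ α = ENNReal.ofReal (|g x| ^ α) := fun x =>
      ENNReal.ofReal_rpow_of_nonneg (abs_nonneg _) hα0.le
    rw [lintegral_congr hcg]
    exact (ofReal_integral_eq_lintegral_ofReal hintα (ae_of_all _ fun x => by positivity)).symm
  -- bounds for the two pieces
  have chainn : (∫⁻ x, Φn x ^ α) ^ (1/α) ≤ ENNReal.ofReal (1/d) * Iα ^ (1/α) := by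
    have h := youngA hα1 G k hGmeas hkmeas (measurableSet_Ioc (a := (0:ℝ)) (b := 1))
    rw [hK2] at h
    calc (∫⁻ x, Φn x ^ α) ^ (1/α)
        ≤ (ENNReal.ofReal (1/d) ^ α * Iα) ^ (1/α) :=
          ENNReal.rpow_le_rpow h (by positivity)
      _ = ENNReal.ofReal (1/d) * Iα ^ (1/α) := by
          rw [ENNReal.mul_rpow_of_nonneg _ _ (by positivity), ← ENNReal.rpow_mul,
            mul_one_div, div_self hα0.ne', ENNReal.rpow_one]
  have chainf : (∫⁻ x, Φf x ^ α) ^ (1/α) ≤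
      ENNReal.ofReal ((1/(α*(1-d)-1)) ^ (1/α)) * I1 := by
    have h := youngB hα1 G k hGmeas hkmeas (measurableSet_Ioi (a := (1:ℝ)))
    rw [hK1] at h
    calc (∫⁻ x, Φf x ^ α) ^ (1/α)
        ≤ (ENNReal.ofReal (1/(α*(1-d)-1)) * I1 ^ α) ^ (1/α) :=
          ENNReal.rpow_le_rpow h (by positivity)
      _ = ENNReal.ofReal ((1/(α*(1-d)-1)) ^ (1/α)) * I1 := by
          rw [ENNReal.mul_rpow_of_nonneg _ _ (by positivity), ← ENNReal.rpow_mul,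
            mul_one_div, div_self hα0.ne', ENNReal.rpow_one,
            ENNReal.ofReal_rpow_of_nonneg (by positivity) (by positivity)]
  -- the main bound in ℝ≥0∞
  have main_ennreal : L ^ (1/α) ≤ ENNReal.ofReal
      ((1/(Real.Gamma d * (α*(1-d)-1) ^ (1/α))) * (∫ x, |g x|) +
        (1/(Real.Gamma d * d)) * (∫ x, |g x| ^ α) ^ (1/α)) := by
    calc L ^ (1/α)
        ≤ ((ENNReal.ofReal c) ^ α * ∫⁻ x, (Φn x + Φf x) ^ α) ^ (1/α) := by
          refine ENNReal.rpow_le_rpow ?_ (by positivity)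
          calc L ≤ ∫⁻ x, (ENNReal.ofReal c * (Φn x + Φf x)) ^ α :=
                lintegral_mono fun x => ENNReal.rpow_le_rpow (step1 x) hα0.le
            _ = ∫⁻ x, (ENNReal.ofReal c) ^ α * (Φn x + Φf x) ^ α :=
                lintegral_congr fun x => ENNReal.mul_rpow_of_nonneg _ _ hα0.le
            _ = (ENNReal.ofReal c) ^ α * ∫⁻ x, (Φn x + Φf x) ^ α :=
                lintegral_const_mul _ ((hΦnmeas.add hΦfmeas).pow_const _)
      _ = ENNReal.ofReal c * (∫⁻ x, (Φn x + Φf x) ^ α) ^ (1/α) := by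
          rw [ENNReal.mul_rpow_of_nonneg _ _ (by positivity), ← ENNReal.rpow_mul,
            mul_one_div, div_self hα0.ne', ENNReal.rpow_one]
      _ ≤ ENNReal.ofReal c * ((∫⁻ x, Φn x ^ α) ^ (1/α) + (∫⁻ x, Φf x ^ α) ^ (1/α)) := by
          refine mul_le_mul_right ?_ _
          have h := ENNReal.lintegral_Lp_add_le (μ := volume) hΦnmeas.aemeasurable hΦfmeas.aemeasurable hα1.le
          simpa [Pi.add_apply] using h
      _ ≤ ENNReal.ofReal c * (ENNReal.ofReal (1/d) * Iα ^ (1/α) +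
            ENNReal.ofReal ((1/(α*(1-d)-1)) ^ (1/α)) * I1) :=
          mul_le_mul_right (add_le_add chainn chainf) _
      _ = ENNReal.ofReal
          ((1/(Real.Gamma d * (α*(1-d)-1) ^ (1/α))) * (∫ x, |g x|) +
            (1/(Real.Gamma d * d)) * (∫ x, |g x| ^ α) ^ (1/α)) := by
          rw [hI1v, hIαv,
            ENNReal.ofReal_rpow_of_nonneg (integral_nonneg fun x => by positivity) (by positivity),
            ← ENNReal.ofReal_mul (by positivity), ← ENNReal.ofReal_mul (by positivity),
            ← ENNReal.ofReal_add (by positivity) (by positivity),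
            ← ENNReal.ofReal_mul hc0]
          congr 1
          have hpow : ((1:ℝ)/(α*(1-d)-1)) ^ (1/α) = 1/((α*(1-d)-1) ^ (1/α)) := by
            rw [Real.div_rpow zero_le_one hP.le, Real.one_rpow]
          rw [hpow, hc]
          have hΓne : Real.Gamma d ≠ 0 := hΓ.ne'
          have hdne : d ≠ 0 := hd0.ne'
          have hPne : (α*(1-d)-1) ^ (1/α) ≠ 0 := (Real.rpow_pos_of_pos hP _).ne'
          field_simp
          ring
  -- measurability of the fractional integral
  have hF : Measurable (fun p : ℝ × ℝ => if p.1 < p.2 then g p.2 * (p.2 - p.1) ^ (d-1) else 0) := by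
    refine Measurable.ite (measurableSet_lt measurable_fst measurable_snd) ?_ measurable_const
    fun_prop
  have hRL : Measurable (RLright d g) := by
    have heq : RLright d g = fun x => (1/Real.Gamma d) *
        ∫ t, (fun p : ℝ × ℝ => if p.1 < p.2 then g p.2 * (p.2 - p.1) ^ (d-1) else 0) (x, t) := by
      funext x
      rw [RLright]
      congr 1
      rw [← integral_indicator measurableSet_Ioi]
      refine integral_congr_ae (ae_of_all _ fun t => ?_)
      by_cases h : x < t
      · simp [Set.indicator_of_mem, Set.mem_Ioi.mpr h, h]
      · rw [Set.indicator_of_notMem (by simpa using h)]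
        simp [h]
    rw [heq]
    exact measurable_const.mul hF.stronglyMeasurable.integral_prod_right'.measurable
  have hmeasRL : AEStronglyMeasurable (fun x => |RLright d g x| ^ α) volume := by
    apply Measurable.aestronglyMeasurable
    fun_prop
  -- convert the left-hand side
  have key : (∫ x, |RLright d g x| ^ α) = L.toReal := by
    rw [integral_eq_lintegral_of_nonneg_ae (ae_of_all _ fun x => by positivity) hmeasRL, hL]
    congr 1
    exact lintegral_congr fun x =>
      (ENNReal.ofReal_rpow_of_nonneg (abs_nonneg _) hα0.le).symm
  calc (∫ x, |RLright d g x| ^ α) ^ (1/α) = (L ^ (1/α)).toReal := by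
        rw [key, ENNReal.toReal_rpow]
    _ ≤ _ := by
        refine ENNReal.toReal_le_of_le_ofReal ?_ main_ennreal
        have h1 : (0:ℝ) ≤ (∫ x, |g x|) := integral_nonneg fun x => abs_nonneg _
        have h2 : (0:ℝ) ≤ (∫ x, |g x| ^ α) ^ (1/α) :=
          Real.rpow_nonneg (integral_nonneg fun x => by positivity) _
        have := hMpos.le
        have := hNpos.le
        positivity
end

section
/- Let 1 < α < 2, d ∈ (0, 1 − 1/α), θ_1, θ_2 ∈ ℝ, and let g : ℝ → ℝ be measurable with g(s) = 0 for all s < 0 and |g(s)| ≤ C e^{−cs} for all s ≥ 0, for some constants C, c > 0. Then there exist constants K_1, K_2 > 0 (independent of t and x) such that for all t < 0 and all x > 1: |t φ(t,x)| ≤ K_1 (x−1)^{d−1} and |t ψ(t,x)| ≤ K_2 x^{d−1}. -/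
open MeasureTheory intervalIntegral

/-- `φ(t,x) = (1/Γ(d)) ∫_1^x θ₁ g(t(1-u)) (x-u)^{d-1} du`. -/
noncomputable def phiFun (d θ₁ : ℝ) (g : ℝ → ℝ) (t x : ℝ) : ℝ :=
  (1 / Real.Gamma d) * ∫ u in (1 : ℝ)..x, θ₁ * g (t * (1 - u)) * (x - u) ^ (d - 1)

/-- `ψ(t,x) = (1/Γ(d)) ∫_0^x θ₂ g(-tu) (x-u)^{d-1} du`. -/
noncomputable def psiFun (d θ₂ : ℝ) (g : ℝ → ℝ) (t x : ℝ) : ℝ :=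
  (1 / Real.Gamma d) * ∫ u in (0 : ℝ)..x, θ₂ * g (-(t * u)) * (x - u) ^ (d - 1)

lemma rpowInt (d p q : ℝ) (hd : -1 < d - 1) :
    IntervalIntegrable (fun u => (q - u) ^ (d - 1)) volume p q := by
  have h := (intervalIntegrable_rpow' hd (a := q - p) (b := 0)).comp_sub_left q
  simpa using h

lemma key (d c t p q : ℝ) (hd : 0 < d) (hd1 : d < 1) (hc : 0 < c) (ht : t < 0) (hpq : p < q) :
    (∫ u in p..q, (-t) * Real.exp (c * t * (u - p)) * (q - u) ^ (d - 1))
      ≤ (2 ^ (1 - d) / c + 2 / (c * d)) * (q - p) ^ (d - 1) := by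
  set a := q - p with ha_def
  have ha : 0 < a := by simp [ha_def]; linarith
  set f1 : ℝ → ℝ := fun u => 2 ^ (1 - d) * a ^ (d - 1) * ((-t) * Real.exp (c * t * (u - p)))
  set f2 : ℝ → ℝ := fun u => 2 / (c * a) * (q - u) ^ (d - 1)
  have hIrpow := rpowInt d p q (by linarith)
  have hcont : Continuous fun u => (-t) * Real.exp (c * t * (u - p)) := by fun_prop
  have hILHS : IntervalIntegrable
      (fun u => (-t) * Real.exp (c * t * (u - p)) * (q - u) ^ (d - 1)) volume p q :=
    hIrpow.continuousOn_mul hcont.continuousOn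
  have hIf1 : IntervalIntegrable f1 volume p q := (by fun_prop : Continuous f1).intervalIntegrable _ _
  have hIf2 : IntervalIntegrable f2 volume p q := hIrpow.const_mul _
  have hnt : (0:ℝ) ≤ -t := by linarith
  -- pointwise bound
  have hpt : ∀ u ∈ Set.Icc p q,
      (-t) * Real.exp (c * t * (u - p)) * (q - u) ^ (d - 1) ≤ f1 u + f2 u := by
    intro u hu
    obtain ⟨hu1, hu2⟩ := hu
    have he : (0:ℝ) ≤ Real.exp (c * t * (u - p)) := (Real.exp_pos _).le
    have hr : (0:ℝ) ≤ (q - u) ^ (d - 1) := Real.rpow_nonneg (by linarith) _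
    have hf2n : (0:ℝ) ≤ f2 u := by positivity
    have hf1n : (0:ℝ) ≤ f1 u := by positivity
    have hhalf : (a/2) ^ (d-1) = 2 ^ (1-d) * a ^ (d-1) := by
      rw [div_eq_mul_inv, Real.mul_rpow ha.le (by norm_num), Real.inv_rpow (by norm_num),
        ← Real.rpow_neg (by norm_num)]
      rw [neg_sub]; ring
    by_cases hcase : u ≤ (p + q) / 2
    · have h1 : a / 2 ≤ q - u := by simp [ha_def]; linarith
      have h2 : (q - u) ^ (d - 1) ≤ (a / 2) ^ (d - 1) :=
        Real.rpow_le_rpow_of_nonpos (by linarith) h1 (by linarith)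
      have : (-t) * Real.exp (c * t * (u - p)) * (q - u) ^ (d - 1) ≤ f1 u := by
        rw [show f1 u = (-t) * Real.exp (c * t * (u - p)) * (2 ^ (1-d) * a ^ (d-1)) by ring]
        rw [← hhalf]
        exact mul_le_mul_of_nonneg_left h2 (by positivity)
      linarith
    · push_neg at hcase
      have h1 : a / 2 ≤ u - p := by simp [ha_def]; linarith
      have h2 : Real.exp (c * t * (u - p)) ≤ Real.exp (c * t * (a / 2)) := by
        apply Real.exp_le_exp.mpr
        have hct : c * t ≤ 0 := by nlinarith
        nlinarith [mul_nonneg (neg_nonneg.mpr hct) (by linarith : (0:ℝ) ≤ u - p - a/2)]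
      have hz : c * (-t) * (a / 2) * Real.exp (-(c * (-t) * (a/2))) ≤ 1 := by
        have h3 : c * (-t) * (a/2) ≤ Real.exp (c * (-t) * (a/2)) := by
          have := Real.add_one_le_exp (c * (-t) * (a/2)); linarith
        rw [Real.exp_neg, ← div_eq_mul_inv, div_le_one (Real.exp_pos _)]
        exact h3
      have h4 : (-t) * Real.exp (c * t * (a/2)) ≤ 2 / (c * a) := by
        have hEeq : Real.exp (c * t * (a/2)) = Real.exp (-(c * (-t) * (a/2))) := by ring_nf
        rw [hEeq, le_div_iff₀ (by positivity : (0:ℝ) < c * a)]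
        nlinarith [hz]
      have : (-t) * Real.exp (c * t * (u - p)) * (q - u) ^ (d - 1) ≤ f2 u := by
        have h5 : (-t) * Real.exp (c * t * (u - p)) ≤ 2 / (c * a) := by
          calc (-t) * Real.exp (c * t * (u - p)) ≤ (-t) * Real.exp (c * t * (a/2)) :=
                mul_le_mul_of_nonneg_left h2 hnt
            _ ≤ 2 / (c * a) := h4
        exact mul_le_mul_of_nonneg_right h5 hr
      linarith
  have hmono := intervalIntegral.integral_mono_on hpq.le hILHS (hIf1.add hIf2) hpt
  have hadd : (∫ u in p..q, (f1 u + f2 u)) = (∫ u in p..q, f1 u) + ∫ u in p..q, f2 u :=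
    integral_add hIf1 hIf2
  -- compute/bound ∫ f1
  have hexp : (∫ u in p..q, (-t) * Real.exp (c * t * (u - p))) ≤ 1 / c := by
    have hderiv : ∀ u ∈ Set.uIcc p q,
        HasDerivAt (fun u => -(1/c) * Real.exp (c * t * (u - p)))
          ((-t) * Real.exp (c * t * (u - p))) u := by
      intro u _
      have h1 : HasDerivAt (fun u : ℝ => c * t * (u - p)) (c * t) u := by
        simpa using (((hasDerivAt_id u).sub_const p).const_mul (c * t))
      have h2 := (h1.exp).const_mul (-(1/c))
      refine h2.congr_deriv ?_
      rw [show -(1 / c) * (Real.exp (c * t * (u - p)) * (c * t)) = -t * Real.exp (c * t * (u - p)) * (c / c) by ring, div_self hc.ne']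
      ring
    have hint : IntervalIntegrable (fun u => (-t) * Real.exp (c * t * (u - p))) volume p q :=
      hcont.intervalIntegrable _ _
    rw [intervalIntegral.integral_eq_sub_of_hasDerivAt hderiv hint]
    have := (Real.exp_pos (c * t * (q - p))).le
    have hc' : 0 < 1/c := by positivity
    have : 0 ≤ (1/c) * Real.exp (c * t * (q - p)) := by positivity
    simp only [sub_self, mul_zero, Real.exp_zero]
    nlinarith
  have hf1int : (∫ u in p..q, f1 u) ≤ 2 ^ (1 - d) / c * a ^ (d - 1) := by
    have : (∫ u in p..q, f1 u)
        = 2 ^ (1-d) * a ^ (d-1) * ∫ u in p..q, (-t) * Real.exp (c * t * (u - p)) := by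
      simp [f1, intervalIntegral.integral_const_mul]
    rw [this]
    have hco : (0:ℝ) ≤ 2 ^ (1-d) * a ^ (d-1) := by positivity
    calc 2 ^ (1-d) * a ^ (d-1) * ∫ u in p..q, (-t) * Real.exp (c * t * (u - p))
        ≤ 2 ^ (1-d) * a ^ (d-1) * (1/c) := mul_le_mul_of_nonneg_left hexp hco
      _ = 2 ^ (1 - d) / c * a ^ (d - 1) := by ring
  -- compute ∫ f2
  have hrint : (∫ u in p..q, (q - u) ^ (d - 1)) = a ^ d / d := by
    rw [intervalIntegral.integral_comp_sub_left (fun v => v ^ (d-1)) q]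
    have : (∫ v in q - q..q - p, v ^ (d-1)) = ∫ v in (0:ℝ)..a, v ^ (d-1) := by
      norm_num [ha_def]
    rw [this, integral_rpow (Or.inl (by linarith))]
    rw [Real.zero_rpow (by linarith : d - 1 + 1 ≠ 0)]
    norm_num
  have hf2int : (∫ u in p..q, f2 u) = 2 / (c * d) * a ^ (d - 1) := by
    have : (∫ u in p..q, f2 u) = 2 / (c * a) * (a ^ d / d) := by
      simp [f2, intervalIntegral.integral_const_mul, hrint]
    rw [this]
    have had : a ^ d = a ^ (d - 1) * a := by
      rw [← Real.rpow_add_one ha.ne']; ring_nf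
    rw [had]
    field_simp
  calc (∫ u in p..q, (-t) * Real.exp (c * t * (u - p)) * (q - u) ^ (d - 1))
      ≤ (∫ u in p..q, f1 u) + ∫ u in p..q, f2 u := by rw [← hadd]; exact hmono
    _ ≤ 2 ^ (1 - d) / c * a ^ (d - 1) + 2 / (c * d) * a ^ (d - 1) := by
        rw [hf2int]; linarith
    _ = (2 ^ (1 - d) / c + 2 / (c * d)) * a ^ (d - 1) := by ring

lemma abs_int_le (d c t p q θ C : ℝ) (g : ℝ → ℝ)
    (hgbd : ∀ s : ℝ, 0 ≤ s → |g s| ≤ C * Real.exp (-c * s)) (hC : 0 < C) (hc : 0 < c)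
    (hd : 0 < d) (hd1 : d < 1) (ht : t < 0) (hpq : p < q) :
    |t| * |∫ u in p..q, θ * g (-(t * (u - p))) * (q - u) ^ (d - 1)|
      ≤ |θ| * C * ((2 ^ (1 - d) / c + 2 / (c * d)) * (q - p) ^ (d - 1)) := by
  set G : ℝ → ℝ := fun u => |θ| * C * Real.exp (c * t * (u - p)) * (q - u) ^ (d - 1) with hG
  have hIrpow := rpowInt d p q (by linarith)
  have hcont : Continuous fun u => |θ| * C * Real.exp (c * t * (u - p)) := by fun_prop
  have hIG : IntervalIntegrable G volume p q := hIrpow.continuousOn_mul hcont.continuousOn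
  have hstep1 : |∫ u in p..q, θ * g (-(t * (u - p))) * (q - u) ^ (d - 1)|
      ≤ |∫ u in p..q, G u| := by
    rw [← Real.norm_eq_abs (∫ u in p..q, θ * g (-(t * (u - p))) * (q - u) ^ (d - 1))]
    apply intervalIntegral.norm_integral_le_abs_of_norm_le (g := G) _ hIG
    rw [Set.uIoc_of_le hpq.le]
    filter_upwards [ae_restrict_mem measurableSet_Ioc] with u hu
    obtain ⟨hu1, hu2⟩ := hu
    have hs : (0:ℝ) ≤ -(t * (u - p)) := by nlinarith
    have hb := hgbd _ hs
    have hexpeq : -c * -(t * (u - p)) = c * t * (u - p) := by ring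
    rw [hexpeq] at hb
    have hr : (0:ℝ) ≤ (q - u) ^ (d - 1) := Real.rpow_nonneg (by linarith) _
    simp only [Real.norm_eq_abs, abs_mul, abs_of_nonneg hr, hG]
    apply mul_le_mul_of_nonneg_right _ hr
    calc |θ| * |g (-(t * (u - p)))| ≤ |θ| * (C * Real.exp (c * t * (u - p))) :=
          mul_le_mul_of_nonneg_left hb (abs_nonneg _)
      _ = |θ| * C * Real.exp (c * t * (u - p)) := by ring
  have hGnn : (0:ℝ) ≤ ∫ u in p..q, G u := by
    apply intervalIntegral.integral_nonneg hpq.le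
    intro u hu
    have hr : (0:ℝ) ≤ (q - u) ^ (d - 1) := Real.rpow_nonneg (by linarith [hu.2]) _
    positivity
  have hGeq : |t| * ∫ u in p..q, G u
      = |θ| * C * ∫ u in p..q, (-t) * Real.exp (c * t * (u - p)) * (q - u) ^ (d - 1) := by
    rw [show |t| = -t from abs_of_neg ht]
    rw [← intervalIntegral.integral_const_mul, ← intervalIntegral.integral_const_mul]
    apply intervalIntegral.integral_congr
    intro u _
    simp only [hG]
    ring
  have hkey := key d c t p q hd hd1 hc ht hpq
  calc |t| * |∫ u in p..q, θ * g (-(t * (u - p))) * (q - u) ^ (d - 1)|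
      ≤ |t| * |∫ u in p..q, G u| := mul_le_mul_of_nonneg_left hstep1 (abs_nonneg _)
    _ = |t| * ∫ u in p..q, G u := by rw [abs_of_nonneg hGnn]
    _ = |θ| * C * ∫ u in p..q, (-t) * Real.exp (c * t * (u - p)) * (q - u) ^ (d - 1) := hGeq
    _ ≤ |θ| * C * ((2 ^ (1 - d) / c + 2 / (c * d)) * (q - p) ^ (d - 1)) :=
        mul_le_mul_of_nonneg_left hkey (by positivity)


/-- there exist `K₁, K₂ > 0` such that for all `t < 0` and `x > 1`,
`|t φ(t,x)| ≤ K₁ (x-1)^{d-1}` and `|t ψ(t,x)| ≤ K₂ x^{d-1}`. -/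
theorem stmt12 (α d θ₁ θ₂ : ℝ) (hα : 1 < α ∧ α < 2)
    (hd : d ∈ Set.Ioo (0 : ℝ) (1 - 1 / α))
    (g : ℝ → ℝ) (hg : Measurable g) (C c : ℝ) (hC : 0 < C) (hc : 0 < c)
    (hg0 : ∀ s < (0 : ℝ), g s = 0)
    (hgbd : ∀ s : ℝ, 0 ≤ s → |g s| ≤ C * Real.exp (-c * s)) :
    ∃ K₁ > (0 : ℝ), ∃ K₂ > (0 : ℝ), ∀ t < (0 : ℝ), ∀ x > (1 : ℝ),
      |t * phiFun d θ₁ g t x| ≤ K₁ * (x - 1) ^ (d - 1) ∧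
        |t * psiFun d θ₂ g t x| ≤ K₂ * x ^ (d - 1) := by
  obtain ⟨hd0, hdu⟩ := hd
  have hα1 : 1 < α := hα.1
  have hd1 : d < 1 := by
    have h1 : 0 < 1 / α := by positivity
    linarith
  set M : ℝ := 2 ^ (1 - d) / c + 2 / (c * d) with hM
  have hM0 : 0 < M := by positivity
  have hΓ : 0 < Real.Gamma d := Real.Gamma_pos_of_pos hd0
  refine ⟨|θ₁| * C * M / Real.Gamma d + 1, by positivity,
    |θ₂| * C * M / Real.Gamma d + 1, by positivity, ?_⟩
  intro t ht x hx
  have hΓinv : (0:ℝ) < 1 / Real.Gamma d := by positivity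
  constructor
  · have hcong : (∫ u in (1:ℝ)..x, θ₁ * g (t * (1 - u)) * (x - u) ^ (d - 1))
        = ∫ u in (1:ℝ)..x, θ₁ * g (-(t * (u - 1))) * (x - u) ^ (d - 1) := by
      apply intervalIntegral.integral_congr
      intro u _
      beta_reduce
      rw [show t * (1 - u) = -(t * (u - 1)) by ring]
    have hb := abs_int_le d c t 1 x θ₁ C g hgbd hC hc hd0 hd1 ht hx
    have hr : (0:ℝ) ≤ (x - 1) ^ (d - 1) := Real.rpow_nonneg (by linarith) _
    have heq : |t * phiFun d θ₁ g t x|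
        = (1 / Real.Gamma d) * (|t| * |∫ u in (1:ℝ)..x, θ₁ * g (-(t * (u - 1))) * (x - u) ^ (d - 1)|) := by
      rw [phiFun, hcong, abs_mul, abs_mul, abs_of_pos hΓinv]
      ring
    rw [heq]
    calc (1 / Real.Gamma d) * (|t| * |∫ u in (1:ℝ)..x, θ₁ * g (-(t * (u - 1))) * (x - u) ^ (d - 1)|)
        ≤ (1 / Real.Gamma d) * (|θ₁| * C * (M * (x - 1) ^ (d - 1))) :=
          mul_le_mul_of_nonneg_left hb hΓinv.le
      _ = (|θ₁| * C * M / Real.Gamma d) * (x - 1) ^ (d - 1) := by field_simp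
      _ ≤ (|θ₁| * C * M / Real.Gamma d + 1) * (x - 1) ^ (d - 1) := by
          apply mul_le_mul_of_nonneg_right _ hr
          linarith
  · have hx0 : (0:ℝ) < x := by linarith
    have hcong : (∫ u in (0:ℝ)..x, θ₂ * g (-(t * u)) * (x - u) ^ (d - 1))
        = ∫ u in (0:ℝ)..x, θ₂ * g (-(t * (u - 0))) * (x - u) ^ (d - 1) := by
      apply intervalIntegral.integral_congr
      intro u _
      beta_reduce
      rw [show -(t * u) = -(t * (u - 0)) by ring]
    have hb := abs_int_le d c t 0 x θ₂ C g hgbd hC hc hd0 hd1 ht hx0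
    rw [sub_zero] at hb
    have hr : (0:ℝ) ≤ x ^ (d - 1) := Real.rpow_nonneg hx0.le _
    have heq : |t * psiFun d θ₂ g t x|
        = (1 / Real.Gamma d) * (|t| * |∫ u in (0:ℝ)..x, θ₂ * g (-(t * (u - 0))) * (x - u) ^ (d - 1)|) := by
      rw [psiFun, hcong, abs_mul, abs_mul, abs_of_pos hΓinv]
      ring
    rw [heq]
    calc (1 / Real.Gamma d) * (|t| * |∫ u in (0:ℝ)..x, θ₂ * g (-(t * (u - 0))) * (x - u) ^ (d - 1)|)
        ≤ (1 / Real.Gamma d) * (|θ₂| * C * (M * x ^ (d - 1))) :=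
          mul_le_mul_of_nonneg_left hb hΓinv.le
      _ = (|θ₂| * C * M / Real.Gamma d) * x ^ (d - 1) := by field_simp
      _ ≤ (|θ₂| * C * M / Real.Gamma d + 1) * x ^ (d - 1) := by
          apply mul_le_mul_of_nonneg_right _ hr
          linarith
end

section
/- Let 1 < α < 2, d ∈ (0, 1 − 1/α), and θ_1, θ_2 ∈ ℝ. Then the function x ↦ |θ_1 (x−1)^{d−1} + θ_2 x^{d−1}|^α − |θ_1 (x−1)^{d−1}|^α − |θ_2 x^{d−1}|^α is (absolutely) Lebesgue integrable on (1, ∞); in particular the constant C_0 = ∫_1^∞ ( |θ_1 (x−1)^{d−1} + θ_2 x^{d−1}|^α − |θ_1 (x−1)^{d−1}|^α − |θ_2 x^{d−1}|^α ) dx is a well-defined finite real number. -/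
open MeasureTheory

set_option maxHeartbeats 1000000

open MeasureTheory

/-- From Bernoulli: for `0 ≤ v ≤ u ≤ M`, `u^α - v^α ≤ α * M^(α-1) * (u - v)`. -/
lemma aux_rpow_sub_rpow_le {u v M α : ℝ} (hv : 0 ≤ v) (hvu : v ≤ u) (huM : u ≤ M)
    (hα : 1 ≤ α) : u ^ α - v ^ α ≤ α * M ^ (α - 1) * (u - v) := by
  have hu : 0 ≤ u := hv.trans hvu
  rcases eq_or_lt_of_le hu with h0 | hu0
  · have : v = 0 := le_antisymm (hvu.trans h0.symm.le) hv
    simp [← h0, this]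
  · have hs : (-1 : ℝ) ≤ v / u - 1 := by
      have : 0 ≤ v / u := div_nonneg hv hu0.le
      linarith
    have hb := one_add_mul_self_le_rpow_one_add hs hα
    rw [add_sub_cancel] at hb
    have hdr : (v / u) ^ α = v ^ α / u ^ α := Real.div_rpow hv hu0.le α
    rw [hdr] at hb
    have huα : (0 : ℝ) < u ^ α := Real.rpow_pos_of_pos hu0 α
    have hkey : u ^ α + α * (v / u - 1) * u ^ α ≤ v ^ α := by
      have := mul_le_mul_of_nonneg_right hb huα.le
      calc u ^ α + α * (v / u - 1) * u ^ α = (1 + α * (v / u - 1)) * u ^ α := by ring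
        _ ≤ (v ^ α / u ^ α) * u ^ α := this
        _ = v ^ α := div_mul_cancel₀ _ huα.ne'
    have hsplit : u ^ α = u * u ^ (α - 1) := by
      rw [← Real.rpow_one_add' hu (by intro h; linarith)]
      ring_nf
    have h2 : α * (v / u - 1) * u ^ α = α * u ^ (α - 1) * (v - u) := by
      rw [hsplit]
      field_simp
    rw [h2] at hkey
    have hM : u ^ (α - 1) ≤ M ^ (α - 1) :=
      Real.rpow_le_rpow hu0.le huM (by linarith)
    have hMuv : α * u ^ (α - 1) * (u - v) ≤ α * M ^ (α - 1) * (u - v) := by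
      apply mul_le_mul_of_nonneg_right _ (by linarith)
      exact mul_le_mul_of_nonneg_left hM (by linarith)
    nlinarith
/-- Key bound: `||a+b|^α - |a|^α| ≤ α (|a|+|b|)^(α-1) |b|`. -/
lemma aux_key {a b α : ℝ} (hα : 1 ≤ α) :
    |(|a + b| ^ α - |a| ^ α)| ≤ α * (|a| + |b|) ^ (α - 1) * |b| := by
  have h1 : |(|a + b| - |a|)| ≤ |b| := by
    simpa using abs_abs_sub_abs_le_abs_sub (a + b) a
  have hu : |a + b| ≤ |a| + |b| := abs_add_le a b
  have hv : |a| ≤ |a| + |b| := le_add_of_nonneg_right (abs_nonneg b)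
  have hC : 0 ≤ α * (|a| + |b|) ^ (α - 1) :=
    mul_nonneg (by linarith) (Real.rpow_nonneg (by positivity) _)
  rw [abs_le]
  rcases le_total |a| |a + b| with h | h
  · constructor
    · have hm : |a| ^ α ≤ |a + b| ^ α := Real.rpow_le_rpow (abs_nonneg a) h (by linarith)
      have := mul_nonneg hC (abs_nonneg b)
      linarith
    · have := aux_rpow_sub_rpow_le (abs_nonneg a) h hu hα
      have h2 : |a + b| - |a| ≤ |b| := (abs_le.mp h1).2
      nlinarith
  · constructor
    · have := aux_rpow_sub_rpow_le (abs_nonneg (a + b)) h hv hα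
      have h2 : |a| - |a + b| ≤ |b| := by
        have := (abs_le.mp h1).1; linarith
      nlinarith
    · have hle : |a + b| ^ α ≤ |a| ^ α := Real.rpow_le_rpow (abs_nonneg _) h (by linarith)
      nlinarith [abs_nonneg b, Real.rpow_nonneg (abs_nonneg b) α,
        mul_nonneg hC (abs_nonneg b)]

lemma aux_add_rpow {x y p : ℝ} (hx : 0 ≤ x) (hy : 0 ≤ y) (hp : 0 ≤ p) :
    (x + y) ^ p ≤ 2 ^ p * (x ^ p + y ^ p) := by
  rcases le_total x y with h | h
  · calc (x + y) ^ p ≤ (2 * y) ^ p := Real.rpow_le_rpow (by linarith) (by linarith) hp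
      _ = 2 ^ p * y ^ p := Real.mul_rpow (by norm_num) hy
      _ ≤ 2 ^ p * (x ^ p + y ^ p) := by
          have := Real.rpow_nonneg hx p
          nlinarith [Real.rpow_nonneg (show (0:ℝ) ≤ 2 by norm_num) p]
  · calc (x + y) ^ p ≤ (2 * x) ^ p := Real.rpow_le_rpow (by linarith) (by linarith) hp
      _ = 2 ^ p * x ^ p := Real.mul_rpow (by norm_num) hx
      _ ≤ 2 ^ p * (x ^ p + y ^ p) := by
          have := Real.rpow_nonneg hy p
          nlinarith [Real.rpow_nonneg (show (0:ℝ) ≤ 2 by norm_num) p]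

/-- the function
`x ↦ |θ₁(x-1)^{d-1} + θ₂ x^{d-1}|^α - |θ₁(x-1)^{d-1}|^α - |θ₂ x^{d-1}|^α`
is Lebesgue integrable on `(1, ∞)`; in particular the corresponding integral
is a well-defined finite real constant. -/
theorem stmt15 (α d θ₁ θ₂ : ℝ) (hα : 1 < α ∧ α < 2)
    (hd : d ∈ Set.Ioo (0 : ℝ) (1 - 1 / α)) :
    IntegrableOn
      (fun x : ℝ =>
        |θ₁ * (x - 1) ^ (d - 1) + θ₂ * x ^ (d - 1)| ^ α -
          |θ₁ * (x - 1) ^ (d - 1)| ^ α - |θ₂ * x ^ (d - 1)| ^ α)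
      (Set.Ioi (1 : ℝ)) volume := by
  obtain ⟨hα1, hα2⟩ := hα
  obtain ⟨hd0, hd1⟩ := hd
  have hαpos : (0 : ℝ) < α := by linarith
  have hdlt : d - 1 < -1 / α := by
    rw [neg_div]
    linarith
  have hdα : (d - 1) * α < -1 := by
    have := mul_lt_mul_of_pos_right hdlt hαpos
    rw [div_mul_cancel₀] at this
    · linarith
    · exact hαpos.ne'
  have hd1' : d < 1 := by
    have h1 : 0 < 1 / α := by positivity
    linarith
  have hr : -1 < (d - 1) * (α - 1) := by nlinarith
  set f : ℝ → ℝ := fun x =>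
    |θ₁ * (x - 1) ^ (d - 1) + θ₂ * x ^ (d - 1)| ^ α -
      |θ₁ * (x - 1) ^ (d - 1)| ^ α - |θ₂ * x ^ (d - 1)| ^ α with hf
  -- continuity on Ioi 1
  have hcont : ContinuousOn f (Set.Ioi (1 : ℝ)) := by
    intro x hx
    have hx1 : (1 : ℝ) < x := hx
    have hA : ContinuousAt (fun x : ℝ => θ₁ * (x - 1) ^ (d - 1)) x := by
      exact continuousAt_const.mul
        (((continuousAt_id.sub continuousAt_const).rpow_const
          (Or.inl (by simp; linarith))))
    have hB : ContinuousAt (fun x : ℝ => θ₂ * x ^ (d - 1)) x := by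
      exact continuousAt_const.mul
        (continuousAt_id.rpow_const (Or.inl (by simp; linarith)))
    have := (((hA.add hB).abs.rpow_const (Or.inr hαpos.le)).sub
      (hA.abs.rpow_const (Or.inr hαpos.le))).sub
      (hB.abs.rpow_const (Or.inr hαpos.le))
    exact this.continuousWithinAt
  have hmeas2 : AEStronglyMeasurable f (volume.restrict (Set.Ioc (1:ℝ) 2)) :=
    (hcont.mono Set.Ioc_subset_Ioi_self).aestronglyMeasurable measurableSet_Ioc
  have hmeas3 : AEStronglyMeasurable f (volume.restrict (Set.Ioi (2:ℝ))) :=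
    (hcont.mono (fun x (hx : x ∈ Set.Ioi (2:ℝ)) => (Set.mem_Ioi.mpr (lt_trans one_lt_two (Set.mem_Ioi.mp hx)) : x ∈ Set.Ioi (1:ℝ)))).aestronglyMeasurable
      measurableSet_Ioi
  set A := |θ₁| with hA
  set B := |θ₂| with hB
  -- piece on Ioc 1 2
  have piece1 : IntegrableOn f (Set.Ioc (1 : ℝ) 2) volume := by
    set C := α * 2 ^ (α - 1) * A ^ (α - 1) * B with hC
    set D := α * 2 ^ (α - 1) * B ^ (α - 1) * B + B ^ α with hD
    have hgint : IntegrableOn (fun x : ℝ => C * (x - 1) ^ ((d - 1) * (α - 1)) + D)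
        (Set.Ioc (1 : ℝ) 2) volume := by
      have h1 : IntervalIntegrable (fun x : ℝ => x ^ ((d - 1) * (α - 1))) volume 0 1 :=
        intervalIntegral.intervalIntegrable_rpow' hr
      have h2 := h1.comp_sub_right 1
      norm_num at h2
      have h3 : IntegrableOn (fun x : ℝ => (x - 1) ^ ((d - 1) * (α - 1)))
          (Set.Ioc (1 : ℝ) 2) volume := by
        have := intervalIntegrable_iff.mp h2
        rwa [Set.uIoc_of_le (by norm_num : (1:ℝ) ≤ 2)] at this
      exact (h3.const_mul C).add (integrableOn_const measure_Ioc_lt_top.ne)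
    apply Integrable.mono' hgint hmeas2
    filter_upwards [ae_restrict_mem measurableSet_Ioc] with x hx
    obtain ⟨hx1, hx2⟩ := hx
    rw [Real.norm_eq_abs]
    have ht : (0 : ℝ) < x - 1 := by linarith
    have hxpos : (0 : ℝ) < x := by linarith
    set a := θ₁ * (x - 1) ^ (d - 1) with ha
    set b := θ₂ * x ^ (d - 1) with hb
    have hxd : x ^ (d - 1) ≤ 1 :=
      Real.rpow_le_one_of_one_le_of_nonpos hx1.le (by linarith)
    have habs_b : |b| = B * x ^ (d - 1) := by
      rw [hb, abs_mul, abs_of_nonneg (Real.rpow_nonneg hxpos.le _)]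
    have hbB : |b| ≤ B := by
      rw [habs_b]
      calc B * x ^ (d - 1) ≤ B * 1 := by
            exact mul_le_mul_of_nonneg_left hxd (abs_nonneg _)
        _ = B := mul_one B
    have habs_a : |a| = A * (x - 1) ^ (d - 1) := by
      rw [ha, abs_mul, abs_of_nonneg (Real.rpow_nonneg ht.le _)]
    have haA : |a| ^ (α - 1) = A ^ (α - 1) * (x - 1) ^ ((d - 1) * (α - 1)) := by
      rw [habs_a, Real.mul_rpow (abs_nonneg _) (Real.rpow_nonneg ht.le _),
        ← Real.rpow_mul ht.le]
    have step1 : |f x| ≤ α * (|a| + |b|) ^ (α - 1) * |b| + |b| ^ α := by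
      have h := aux_key (a := a) (b := b) hα1.le
      have h3 : |f x| ≤ |(|a + b| ^ α - |a| ^ α)| + |(|b| ^ α)| := by
        rw [hf]
        simp only [← ha, ← hb]
        exact abs_sub _ _
      rw [abs_of_nonneg (Real.rpow_nonneg (abs_nonneg b) α)] at h3
      linarith
    have step2 : (|a| + |b|) ^ (α - 1) ≤ 2 ^ (α - 1) * (|a| ^ (α - 1) + |b| ^ (α - 1)) :=
      aux_add_rpow (abs_nonneg a) (abs_nonneg b) (by linarith)
    have hbα1 : |b| ^ (α - 1) ≤ B ^ (α - 1) :=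
      Real.rpow_le_rpow (abs_nonneg b) hbB (by linarith)
    have hbα : |b| ^ α ≤ B ^ α := Real.rpow_le_rpow (abs_nonneg b) hbB hαpos.le
    have h2p : (0 : ℝ) ≤ (2 : ℝ) ^ (α - 1) := Real.rpow_nonneg (by norm_num) _
    calc |f x| ≤ α * (|a| + |b|) ^ (α - 1) * |b| + |b| ^ α := step1
      _ ≤ α * (2 ^ (α - 1) * (|a| ^ (α - 1) + |b| ^ (α - 1))) * B + B ^ α := by
          have hsum : α * (|a| + |b|) ^ (α - 1) * |b| ≤
              α * (2 ^ (α - 1) * (|a| ^ (α - 1) + |b| ^ (α - 1))) * B := by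
            apply mul_le_mul
            · exact mul_le_mul_of_nonneg_left step2 hαpos.le
            · exact hbB
            · exact abs_nonneg b
            · positivity
          linarith
      _ ≤ α * (2 ^ (α - 1) * (A ^ (α - 1) * (x - 1) ^ ((d - 1) * (α - 1)) + B ^ (α - 1)))
            * B + B ^ α := by
          rw [haA] at *
          gcongr
      _ ≤ C * (x - 1) ^ ((d - 1) * (α - 1)) + D := by
          rw [hC, hD]
          have hrp : (0 : ℝ) ≤ (x - 1) ^ ((d - 1) * (α - 1)) := Real.rpow_nonneg ht.le _
          nlinarith [Real.rpow_nonneg (abs_nonneg θ₁) (α - 1),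
            Real.rpow_nonneg (abs_nonneg θ₂) (α - 1), abs_nonneg θ₂,
            mul_nonneg h2p hrp]
  have piece2 : IntegrableOn f (Set.Ioi (2 : ℝ)) volume := by
    set E := (2 : ℝ) ^ (1 - d) with hE
    set K := ((A + B) * E) ^ α + (A * E) ^ α + (B * E) ^ α with hK
    have hgint : IntegrableOn (fun x : ℝ => K * x ^ ((d - 1) * α)) (Set.Ioi (2 : ℝ))
        volume := (integrableOn_Ioi_rpow_of_lt hdα two_pos).const_mul K
    apply Integrable.mono' hgint hmeas3
    filter_upwards [ae_restrict_mem measurableSet_Ioi] with x hx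
    rw [Real.norm_eq_abs]
    have hx2 : (2 : ℝ) < x := hx
    have hxpos : (0 : ℝ) < x := by linarith
    have ht : (0 : ℝ) < x - 1 := by linarith
    set a := θ₁ * (x - 1) ^ (d - 1) with ha
    set b := θ₂ * x ^ (d - 1) with hb
    have hxdpos : (0 : ℝ) < x ^ (d - 1) := Real.rpow_pos_of_pos hxpos _
    have hE1 : (1 : ℝ) ≤ E := by
      rw [hE]
      calc (1 : ℝ) = (2 : ℝ) ^ (0 : ℝ) := (Real.rpow_zero 2).symm
        _ ≤ (2 : ℝ) ^ (1 - d) := Real.rpow_le_rpow_of_exponent_le one_le_two (by linarith)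
    have hEpos : (0 : ℝ) < E := by linarith
    have hxd2 : (x / 2) ^ (d - 1) = E * x ^ (d - 1) := by
      rw [Real.div_rpow hxpos.le (by norm_num : (0:ℝ) ≤ 2),
        div_eq_iff (Real.rpow_pos_of_pos two_pos (d - 1)).ne']
      rw [hE, mul_comm ((2:ℝ) ^ (1 - d)) (x ^ (d - 1)), mul_assoc,
        ← Real.rpow_add two_pos]
      norm_num
    have hh : (x - 1) ^ (d - 1) ≤ E * x ^ (d - 1) := by
      rw [← hxd2]
      exact Real.rpow_le_rpow_of_nonpos (by positivity) (by linarith) (by linarith)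
    have hax : |a| ≤ A * E * x ^ (d - 1) := by
      rw [ha, abs_mul, abs_of_nonneg (Real.rpow_nonneg ht.le _)]
      calc A * (x - 1) ^ (d - 1) ≤ A * (E * x ^ (d - 1)) :=
            mul_le_mul_of_nonneg_left hh (abs_nonneg _)
        _ = A * E * x ^ (d - 1) := by ring
    have hbx : |b| ≤ B * E * x ^ (d - 1) := by
      rw [hb, abs_mul, abs_of_nonneg (Real.rpow_nonneg hxpos.le _)]
      have h1 : B ≤ B * E := le_mul_of_one_le_right (abs_nonneg θ₂) hE1
      exact mul_le_mul_of_nonneg_right h1 hxdpos.le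
    have habx : |a + b| ≤ (A + B) * E * x ^ (d - 1) := by
      calc |a + b| ≤ |a| + |b| := abs_add_le a b
        _ ≤ (A + B) * E * x ^ (d - 1) := by
            have : A * E * x ^ (d - 1) + B * E * x ^ (d - 1)
                = (A + B) * E * x ^ (d - 1) := by ring
            linarith
    have hpow : ∀ c : ℝ, 0 ≤ c → (c * E * x ^ (d - 1)) ^ α
        = (c * E) ^ α * x ^ ((d - 1) * α) := by
      intro c hc
      rw [Real.mul_rpow (mul_nonneg hc hEpos.le) hxdpos.le, ← Real.rpow_mul hxpos.le]
    have hX : |a + b| ^ α ≤ ((A + B) * E) ^ α * x ^ ((d - 1) * α) := by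
      rw [← hpow (A + B) (by positivity)]
      exact Real.rpow_le_rpow (abs_nonneg _) habx hαpos.le
    have hY : |a| ^ α ≤ (A * E) ^ α * x ^ ((d - 1) * α) := by
      rw [← hpow A (abs_nonneg _)]
      exact Real.rpow_le_rpow (abs_nonneg _) hax hαpos.le
    have hZ : |b| ^ α ≤ (B * E) ^ α * x ^ ((d - 1) * α) := by
      rw [← hpow B (abs_nonneg _)]
      exact Real.rpow_le_rpow (abs_nonneg _) hbx hαpos.le
    have hXn : 0 ≤ |a + b| ^ α := Real.rpow_nonneg (abs_nonneg _) _
    have hYn : 0 ≤ |a| ^ α := Real.rpow_nonneg (abs_nonneg _) _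
    have hZn : 0 ≤ |b| ^ α := Real.rpow_nonneg (abs_nonneg _) _
    have hgoal : |f x| ≤ K * x ^ ((d - 1) * α) := by
      rw [hf]
      simp only [← ha, ← hb]
      have hKx : K * x ^ ((d - 1) * α) = ((A + B) * E) ^ α * x ^ ((d - 1) * α)
          + (A * E) ^ α * x ^ ((d - 1) * α) + (B * E) ^ α * x ^ ((d - 1) * α) := by
        rw [hK]; ring
      have hn1 : 0 ≤ ((A + B) * E) ^ α * x ^ ((d - 1) * α) :=
        mul_nonneg (Real.rpow_nonneg (by positivity) _) (Real.rpow_nonneg hxpos.le _)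
      have hn2 : 0 ≤ (A * E) ^ α * x ^ ((d - 1) * α) :=
        mul_nonneg (Real.rpow_nonneg (by positivity) _) (Real.rpow_nonneg hxpos.le _)
      have hn3 : 0 ≤ (B * E) ^ α * x ^ ((d - 1) * α) :=
        mul_nonneg (Real.rpow_nonneg (by positivity) _) (Real.rpow_nonneg hxpos.le _)
      rw [abs_le]
      constructor <;> linarith
    exact hgoal
  have hsplit : Set.Ioi (1 : ℝ) = Set.Ioc 1 2 ∪ Set.Ioi 2 :=
    (Set.Ioc_union_Ioi_eq_Ioi (by norm_num : (1:ℝ) ≤ 2)).symm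
  rw [hsplit]
  exact piece1.union piece2
end

section
/- Let 1 < α < 2, d ∈ (0, 1 − 1/α), θ_1, θ_2 ∈ ℝ, and let g : ℝ → ℝ be measurable with g(s) = 0 for all s < 0 and |g(s)| ≤ C e^{−cs} for all s ≥ 0, for some constants C, c > 0. For t < 0 define A(t,x) = ∫_x^t θ_1 g(t−u) (u−x)^{d−1} du and B(x) = ∫_x^0 θ_2 g(−u) (u−x)^{d−1} du, and I(t) = Γ(d)^{−α} ∫_{−∞}^t ( |A(t,x) + B(x)|^α − |A(t,x)|^α − |B(x)|^α ) dx. Then for every t < 0, I(t) = |t|^{αd+1} ∫_1^∞ ( |φ(t,x) + ψ(t,x)|^α − |φ(t,x)|^α − |ψ(t,x)|^α ) dx. -/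
open MeasureTheory

lemma key_subst (h : ℝ → ℝ) (t y b d : ℝ) (ht : t < 0) (hby : b ≤ y) :
    (∫ u in (t*y)..(t*b), h u * (u - t*y) ^ (d-1))
      = (-t) ^ d * ∫ v in b..y, h (t*v) * (y - v) ^ (d-1) := by
  have htne : t ≠ 0 := ne_of_lt ht
  have hnt : (0:ℝ) < -t := by linarith
  have h1 := intervalIntegral.integral_comp_mul_left
      (f := fun u => h u * (u - t*y) ^ (d-1)) (c := t) (a := y) (b := b) htne
  simp only [smul_eq_mul] at h1
  have h2 : (∫ u in (t*y)..(t*b), h u * (u - t*y) ^ (d-1))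
      = t * ∫ v in y..b, h (t*v) * (t*v - t*y) ^ (d-1) := by
    rw [h1, ← mul_assoc, mul_inv_cancel₀ htne, one_mul]
  rw [h2, intervalIntegral.integral_symm b y]
  have h3 : Set.EqOn (fun v => h (t*v) * (t*v - t*y) ^ (d-1))
      (fun v => (-t) ^ (d-1) * (h (t*v) * (y - v) ^ (d-1))) (Set.uIcc b y) := by
    intro v hv
    rw [Set.uIcc_of_le hby] at hv
    have hvy : v ≤ y := hv.2
    have hrw : t*v - t*y = (-t) * (y - v) := by ring
    simp only [hrw, Real.mul_rpow hnt.le (by linarith : (0:ℝ) ≤ y - v)]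
    ring
  rw [intervalIntegral.integral_congr h3, intervalIntegral.integral_const_mul]
  have h4 : (-t) ^ d = (-t) * (-t) ^ (d-1) := by
    have := Real.rpow_add hnt 1 (d-1)
    rw [show (1:ℝ) + (d-1) = d by ring, Real.rpow_one] at this
    exact this
  rw [h4]; ring


/-- with `A(t,x) = ∫_x^t θ₁ g(t-u)(u-x)^{d-1} du`,
`B(x) = ∫_x^0 θ₂ g(-u)(u-x)^{d-1} du` and
`I(t) = Γ(d)^{-α} ∫_{-∞}^t (|A+B|^α - |A|^α - |B|^α) dx`, for every `t < 0`,
`I(t) = |t|^{αd+1} ∫_1^∞ (|φ(t,x)+ψ(t,x)|^α - |φ(t,x)|^α - |ψ(t,x)|^α) dx`. -/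
theorem stmt16 (α d θ₁ θ₂ : ℝ) (hα : 1 < α ∧ α < 2)
    (hd : d ∈ Set.Ioo (0 : ℝ) (1 - 1 / α))
    (g : ℝ → ℝ) (hg : Measurable g) (C c : ℝ) (hC : 0 < C) (hc : 0 < c)
    (hg0 : ∀ s < (0 : ℝ), g s = 0)
    (hgbd : ∀ s : ℝ, 0 ≤ s → |g s| ≤ C * Real.exp (-c * s))
    (A : ℝ → ℝ → ℝ) (hA : ∀ t x, A t x = ∫ u in x..t, θ₁ * g (t - u) * (u - x) ^ (d - 1))
    (B : ℝ → ℝ) (hB : ∀ x, B x = ∫ u in x..(0 : ℝ), θ₂ * g (-u) * (u - x) ^ (d - 1))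
    (I : ℝ → ℝ)
    (hI : ∀ t, I t = (1 / Real.Gamma d ^ α) *
      ∫ x in Set.Iio t, (|A t x + B x| ^ α - |A t x| ^ α - |B x| ^ α)) :
    ∀ t < (0 : ℝ),
      I t = |t| ^ (α * d + 1) *
        ∫ x in Set.Ioi (1 : ℝ),
          (|phiFun d θ₁ g t x + psiFun d θ₂ g t x| ^ α -
            |phiFun d θ₁ g t x| ^ α - |psiFun d θ₂ g t x| ^ α) := by
  intro t ht
  obtain ⟨hd0, hd1⟩ := hd
  have hΓ : 0 < Real.Gamma d := Real.Gamma_pos_of_pos hd0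
  have hnt : (0:ℝ) < -t := by linarith
  set F : ℝ → ℝ := fun x => |A t x + B x| ^ α - |A t x| ^ α - |B x| ^ α with hF
  set k : ℝ := (-t) ^ d * Real.Gamma d with hk
  have hkpos : 0 < k := mul_pos (Real.rpow_pos_of_pos hnt d) hΓ
  -- pointwise identities
  have hApt : ∀ y : ℝ, 1 ≤ y → A t (t*y) = k * phiFun d θ₁ g t y := by
    intro y hy
    rw [hA]
    have := key_subst (fun u => θ₁ * g (t - u)) t y 1 d ht hy
    rw [mul_one] at this
    rw [this, phiFun, hk]
    have harg : ∀ v : ℝ, t - t*v = t * (1 - v) := fun v => by ring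
    simp only [harg]
    field_simp
  have hBpt : ∀ y : ℝ, 0 ≤ y → B (t*y) = k * psiFun d θ₂ g t y := by
    intro y hy
    rw [hB]
    have := key_subst (fun u => θ₂ * g (-u)) t y 0 d ht hy
    rw [mul_zero] at this
    rw [this, psiFun, hk]
    field_simp
  -- pointwise identity for F
  have habs : ∀ z : ℝ, |k * z| ^ α = k ^ α * |z| ^ α := by
    intro z
    rw [abs_mul, abs_of_pos hkpos, Real.mul_rpow hkpos.le (abs_nonneg _)]
  have hFpt : ∀ y ∈ Set.Ioi (1:ℝ), F (t*y) = k ^ α *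
      (|phiFun d θ₁ g t y + psiFun d θ₂ g t y| ^ α -
        |phiFun d θ₁ g t y| ^ α - |psiFun d θ₂ g t y| ^ α) := by
    intro y hy
    have hy1 : (1:ℝ) ≤ y := le_of_lt hy
    have hy0 : (0:ℝ) ≤ y := by linarith
    simp only [hF, hApt y hy1, hBpt y hy0, ← mul_add, habs]
    ring
  -- change of variables in the Iio integral
  have hIio : (∫ x in Set.Iio t, F x) = (-t) * ∫ y in Set.Ioi (1:ℝ), F (t*y) := by
    have e1 : (∫ y in Set.Ioi (1:ℝ), F (t*y))
        = (-t)⁻¹ • ∫ x in Set.Ioi (-t), F (-x) := by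
      have := integral_comp_mul_left_Ioi (fun x => F (-x)) 1 hnt
      simp only [neg_mul, neg_neg, mul_one] at this
      exact this
    have e2 : (∫ x in Set.Ioi (-t), F (-x)) = ∫ x in Set.Iic t, F x := by
      have := integral_comp_neg_Ioi (-t) F
      rwa [neg_neg] at this
    rw [e1, e2, integral_Iic_eq_integral_Iio, smul_eq_mul, ← mul_assoc,
      mul_inv_cancel₀ (ne_of_gt hnt), one_mul]
  have hcongr : (∫ y in Set.Ioi (1:ℝ), F (t*y))
      = k ^ α * ∫ y in Set.Ioi (1:ℝ),
          (|phiFun d θ₁ g t y + psiFun d θ₂ g t y| ^ α -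
            |phiFun d θ₁ g t y| ^ α - |psiFun d θ₂ g t y| ^ α) := by
    rw [setIntegral_congr_fun measurableSet_Ioi hFpt, integral_const_mul]
  rw [hI, ← hF, hIio, hcongr]
  have hkα : k ^ α = (-t) ^ (d * α) * Real.Gamma d ^ α := by
    rw [hk, Real.mul_rpow (Real.rpow_pos_of_pos hnt d).le hΓ.le,
      ← Real.rpow_mul hnt.le]
  have hconst : (1 / Real.Gamma d ^ α) * ((-t) * k ^ α) = |t| ^ (α * d + 1) := by
    rw [hkα, abs_of_neg ht]
    have hΓα : (0:ℝ) < Real.Gamma d ^ α := Real.rpow_pos_of_pos hΓ α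
    have : (-t) ^ (α * d + 1) = (-t) ^ (d * α) * (-t) := by
      rw [Real.rpow_add hnt, Real.rpow_one, mul_comm α d]
    rw [this]
    field_simp
  rw [← mul_assoc, ← mul_assoc, mul_assoc (1 / Real.Gamma d ^ α), hconst]
end
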